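/- arXiv:1410.1958 — 9 statements merged into one kernel-verified Lean document; each statement's English description precedes it below -/
import Mathlib

section
/- Let G be a subgroup of the symmetric group S_n and let χ : G → ℂ be a character of degree 1 (a group homomorphism into the complex numbers whose values have modulus one). Let A = [A_{i,j}], B = [B_{i,j}], C = [C_{i,j}] be m×m block matrices with n×n complex blocks, each positive semidefinite as mn×mn matrices. Then, in the Loewner order on m×m complex matrices, [d_χ^G(A_{i,j} + B_{i,j} + C_{i,j})]_{i,j=1}^m + [d_χ^G(C_{i,j})]_{i,j=1}^m ≥ [d_χ^G(A_{i,j} + C_{i,j})]_{i,j=1}^m + [d_χ^G(B_{i,j} + C_{i,j})]_{i,j=1}^m. That is, generalized matrix functions are completely strongly superadditive over the cone of positive semidefinite matrices. -/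
open Matrix Finset
open scoped ComplexOrder
open scoped Classical

private lemma key_sum {G : Type*} [Group G] [Fintype G] (χ : G →* ℂ)
    (hχ : ∀ g : G, star (χ g) * χ g = 1)
    {U : Type*} [Fintype U] (e : G →* Equiv.Perm U)
    {m : ℕ} (H : Fin m → U → ℂ) (p q : Fin m) :
    ∑ u : U, star (∑ σ : G, χ σ * H p (e σ u)) * (∑ τ : G, χ τ * H q (e τ u))
      = (Fintype.card G : ℂ) * ∑ ρ : G, χ ρ * ∑ u : U, star (H p u) * H q (e ρ u) := by
  have step1 : ∀ σ τ : G, ∑ u : U, star (H p (e σ u)) * H q (e τ u)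
      = ∑ u : U, star (H p u) * H q (e (τ * σ⁻¹) u) := by
    intro σ τ
    rw [← Equiv.sum_comp (e σ) (fun v => star (H p v) * H q (e (τ * σ⁻¹) v))]
    refine Finset.sum_congr rfl fun u _ => ?_
    have h2 : e (τ * σ⁻¹) (e σ u) = e τ u := by
      rw [← Equiv.Perm.mul_apply, ← _root_.map_mul, inv_mul_cancel_right]
    rw [h2]
  have expand : ∀ u : U, star (∑ σ : G, χ σ * H p (e σ u)) * (∑ τ : G, χ τ * H q (e τ u))
      = ∑ σ : G, ∑ τ : G, (star (χ σ) * χ τ) * (star (H p (e σ u)) * H q (e τ u)) := by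
    intro u
    rw [star_sum, Finset.sum_mul_sum]
    refine Finset.sum_congr rfl fun σ _ => Finset.sum_congr rfl fun τ _ => ?_
    rw [star_mul']
    ring
  rw [Finset.sum_congr rfl fun u _ => expand u]
  rw [Finset.sum_comm]
  have inner : ∀ σ : G, ∑ u : U, ∑ τ : G, (star (χ σ) * χ τ) * (star (H p (e σ u)) * H q (e τ u))
      = ∑ ρ : G, χ ρ * ∑ u : U, star (H p u) * H q (e ρ u) := by
    intro σ
    rw [Finset.sum_comm]
    have : ∀ τ : G, ∑ u : U, (star (χ σ) * χ τ) * (star (H p (e σ u)) * H q (e τ u))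
        = (star (χ σ) * χ τ) * ∑ u : U, star (H p u) * H q (e (τ * σ⁻¹) u) := by
      intro τ
      rw [← Finset.mul_sum, step1 σ τ]
    rw [Finset.sum_congr rfl fun τ _ => this τ]
    rw [← Equiv.sum_comp (Equiv.mulRight σ)
      (fun τ => (star (χ σ) * χ τ) * ∑ u : U, star (H p u) * H q (e (τ * σ⁻¹) u))]
    refine Finset.sum_congr rfl fun ρ _ => ?_
    have hcoe : (Equiv.mulRight σ) ρ = ρ * σ := rfl
    rw [hcoe, mul_inv_cancel_right, _root_.map_mul]
    linear_combination (χ ρ * ∑ u : U, star (H p u) * H q (e ρ u)) * hχ σ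
  rw [Finset.sum_congr rfl fun σ _ => inner σ]
  rw [Finset.sum_const, Finset.card_univ, nsmul_eq_mul]

private lemma key_psd {G : Type*} [Group G] [Fintype G] (χ : G →* ℂ)
    (hχ : ∀ g : G, star (χ g) * χ g = 1)
    {U : Type*} [Fintype U] (e : G →* Equiv.Perm U)
    {m : ℕ} (H : Fin m → U → ℂ) :
    (Matrix.of fun p q => ∑ ρ : G, χ ρ * ∑ u : U, star (H p u) * H q (e ρ u)).PosSemidef := by
  set c : ℂ := (((Real.sqrt (Fintype.card G))⁻¹ : ℝ) : ℂ) with hc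
  have hcard : (0 : ℝ) < Fintype.card G := by positivity
  have hcardne : ((Fintype.card G : ℂ)) ≠ 0 := by
    exact_mod_cast Nat.cast_ne_zero.mpr Fintype.card_ne_zero
  have hstarc : star c = c := by
    rw [hc, Complex.star_def, Complex.conj_ofReal]
  have hcc : star c * c = ((Fintype.card G : ℂ))⁻¹ := by
    rw [hstarc, hc, ← Complex.ofReal_mul, ← mul_inv, Real.mul_self_sqrt hcard.le]
    push_cast
    rfl
  set Ψ : Matrix U (Fin m) ℂ := Matrix.of fun u r => c * ∑ σ : G, χ σ * H r (e σ u) with hΨ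
  have hM : (Matrix.of fun p q => ∑ ρ : G, χ ρ * ∑ u : U, star (H p u) * H q (e ρ u))
      = Ψᴴ * Ψ := by
    ext p q
    simp only [Matrix.mul_apply, Matrix.conjTranspose_apply, Matrix.of_apply, hΨ]
    symm
    calc ∑ u : U, star (c * ∑ σ : G, χ σ * H p (e σ u)) * (c * ∑ τ : G, χ τ * H q (e τ u))
        = (star c * c) *
          ∑ u : U, star (∑ σ : G, χ σ * H p (e σ u)) * (∑ τ : G, χ τ * H q (e τ u)) := by
          rw [Finset.mul_sum]
          refine Finset.sum_congr rfl fun u _ => ?_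
          rw [star_mul']
          ring
      _ = ((Fintype.card G : ℂ))⁻¹ *
          ((Fintype.card G : ℂ) * ∑ ρ : G, χ ρ * ∑ u : U, star (H p u) * H q (e ρ u)) := by
          rw [hcc, key_sum χ hχ e H p q]
      _ = ∑ ρ : G, χ ρ * ∑ u : U, star (H p u) * H q (e ρ u) := by
          rw [← mul_assoc, inv_mul_cancel₀ hcardne, one_mul]
  rw [hM]
  exact Matrix.posSemidef_conjTranspose_mul_self Ψ


private def permHom {n : ℕ} (V W : Type*) (G : Subgroup (Equiv.Perm (Fin n))) :
    G →* Equiv.Perm ((Fin n → V) × (Fin n → W)) where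
  toFun σ := Equiv.prodCongr
    (Equiv.arrowCongr (σ : Equiv.Perm (Fin n)) (Equiv.refl V))
    (Equiv.arrowCongr (σ : Equiv.Perm (Fin n)) (Equiv.refl W))
  map_one' := by
    apply Equiv.ext
    rintro ⟨f, w⟩
    simp [Equiv.arrowCongr]
    exact ⟨rfl, rfl⟩
  map_mul' σ τ := by
    apply Equiv.ext
    rintro ⟨f, w⟩
    have hsy : ∀ j : Fin n, (Equiv.symm ((σ : Equiv.Perm (Fin n)) * (τ : Equiv.Perm (Fin n)))) j
        = (Equiv.symm (τ : Equiv.Perm (Fin n))) ((Equiv.symm (σ : Equiv.Perm (Fin n))) j) :=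
      fun _ => rfl
    have h1 : ∀ (g : Fin n → V),
        (g ∘ (Equiv.symm ((σ : Equiv.Perm (Fin n)) * (τ : Equiv.Perm (Fin n)))))
          = (g ∘ (Equiv.symm (τ : Equiv.Perm (Fin n)))) ∘ (Equiv.symm (σ : Equiv.Perm (Fin n))) := by
      intro g; funext j; simp [Function.comp, hsy]
    have h2 : ∀ (g : Fin n → W),
        (g ∘ (Equiv.symm ((σ : Equiv.Perm (Fin n)) * (τ : Equiv.Perm (Fin n)))))
          = (g ∘ (Equiv.symm (τ : Equiv.Perm (Fin n)))) ∘ (Equiv.symm (σ : Equiv.Perm (Fin n))) := by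
      intro g; funext j; simp [Function.comp, hsy]
    simp only [Subgroup.coe_mul, Equiv.Perm.mul_apply, Equiv.prodCongr_apply,
      Equiv.arrowCongr, Equiv.coe_fn_mk, Prod.map_apply, Equiv.refl_apply,
      Equiv.coe_refl, Function.id_comp, CompTriple.comp_eq]
    refine Prod.ext ?_ ?_
    · exact h1 f
    · exact h2 w

private noncomputable def ind {n : ℕ} (f : Fin n → Fin 3) : ℂ :=
  if (∃ i, f i = 0) ∧ (∃ i, f i = 1) then 1 else 0

private lemma ind_star {n : ℕ} (f : Fin n → Fin 3) : star (ind f) = ind f := by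
  unfold ind; split <;> simp

private lemma ind_mul_self {n : ℕ} (f : Fin n → Fin 3) : ind f * ind f = ind f := by
  unfold ind; split <;> simp

private lemma ind_comp {n : ℕ} (f : Fin n → Fin 3) (σ : Equiv.Perm (Fin n)) :
    ind (fun j => f (σ j)) = ind f := by
  have hiff : ((∃ i, f (σ i) = 0) ∧ (∃ i, f (σ i) = 1)) ↔ ((∃ i, f i = 0) ∧ (∃ i, f i = 1)) := by
    constructor
    · rintro ⟨⟨i, hi⟩, ⟨j, hj⟩⟩; exact ⟨⟨σ i, hi⟩, ⟨σ j, hj⟩⟩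
    · rintro ⟨⟨i, hi⟩, ⟨j, hj⟩⟩
      exact ⟨⟨σ⁻¹ i, by simpa using hi⟩, ⟨σ⁻¹ j, by simpa using hj⟩⟩
  unfold ind
  exact if_congr hiff rfl rfl

private lemma indicator_eq {n : ℕ} (f : Fin n → Fin 3) :
    (∏ _i : Fin n, (1:ℂ)) + (∏ i, (![0,0,1] : Fin 3 → ℂ) (f i))
      - (∏ i, (![1,0,1] : Fin 3 → ℂ) (f i)) - (∏ i, (![0,1,1] : Fin 3 → ℂ) (f i))
      = ind f := by
  have hz : ∀ (φ : Fin 3 → ℂ) (t : Fin 3), φ t = 0 → (∃ i, f i = t) →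
      ∏ i, φ (f i) = 0 := by
    rintro φ t h ⟨i, hi⟩
    exact Finset.prod_eq_zero (Finset.mem_univ i) (by rw [hi, h])
  have ho : ∀ (φ : Fin 3 → ℂ), (∀ i, φ (f i) = 1) → ∏ i, φ (f i) = 1 :=
    fun φ h => Finset.prod_eq_one fun i _ => h i
  have h1val : ∀ x : Fin 3, x ≠ 1 → (![1,0,1] : Fin 3 → ℂ) x = 1 := by
    intro x hx; fin_cases x
    · rfl
    · exact absurd rfl hx
    · rfl
  have h0val : ∀ x : Fin 3, x ≠ 0 → (![0,1,1] : Fin 3 → ℂ) x = 1 := by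
    intro x hx; fin_cases x
    · exact absurd rfl hx
    · rfl
    · rfl
  have h2val : ∀ x : Fin 3, x ≠ 0 → x ≠ 1 → (![0,0,1] : Fin 3 → ℂ) x = 1 := by
    intro x hx0 hx1; fin_cases x
    · exact absurd rfl hx0
    · exact absurd rfl hx1
    · rfl
  unfold ind
  by_cases h0 : ∃ i, f i = 0 <;> by_cases h1 : ∃ i, f i = 1
  · rw [if_pos ⟨h0, h1⟩, hz ![0,0,1] 0 (by simp) h0, hz ![1,0,1] 1 (by simp) h1,
      hz ![0,1,1] 0 (by simp) h0]
    simp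
  · rw [if_neg (fun h => h1 h.2), hz ![0,0,1] 0 (by simp) h0, hz ![0,1,1] 0 (by simp) h0,
      ho ![1,0,1] (fun i => h1val _ (fun h => h1 ⟨i, h⟩))]
    simp
  · rw [if_neg (fun h => h0 h.1), hz ![0,0,1] 1 (by simp) h1, hz ![1,0,1] 1 (by simp) h1,
      ho ![0,1,1] (fun i => h0val _ (fun h => h0 ⟨i, h⟩))]
    simp
  · rw [if_neg (fun h => h0 h.1),
      ho ![0,0,1] (fun i => h2val _ (fun h => h0 ⟨i, h⟩) (fun h => h1 ⟨i, h⟩)),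
      ho ![1,0,1] (fun i => h1val _ (fun h => h1 ⟨i, h⟩)),
      ho ![0,1,1] (fun i => h0val _ (fun h => h0 ⟨i, h⟩))]
    simp

private lemma ones_val (x : Fin 3) : (![1,1,1] : Fin 3 → ℂ) x = 1 := by
  fin_cases x <;> rfl

open scoped Classical in
/-- Generalized matrix function `d_χ^G(A) = ∑_{σ ∈ G} χ(σ) ∏_i a_{i σ(i)}`. -/
noncomputable def gmf {n : ℕ} (G : Subgroup (Equiv.Perm (Fin n))) (χ : G →* ℂ)
    (A : Matrix (Fin n) (Fin n) ℂ) : ℂ :=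
  ∑ σ : G, χ σ * ∏ i, A i ((σ : Equiv.Perm (Fin n)) i)

/-- The `mn × mn` matrix obtained from an `m × m` block matrix with `n × n` blocks. -/
def blockMx {m n : ℕ} (A : Fin m → Fin m → Matrix (Fin n) (Fin n) ℂ) :
    Matrix (Fin m × Fin n) (Fin m × Fin n) ℂ :=
  Matrix.of fun p q => A p.1 q.1 p.2 q.2

set_option maxHeartbeats 2000000 in
/-- Generalized matrix functions are completely strongly superadditive over the cone of
positive semidefinite matrices. -/
theorem gmf_completely_strongly_superadditive {n m : ℕ}
    (G : Subgroup (Equiv.Perm (Fin n))) (χ : G →* ℂ)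
    (hχ : ∀ g : G, ‖χ g‖ = 1)
    (A B C : Fin m → Fin m → Matrix (Fin n) (Fin n) ℂ)
    (hA : (blockMx A).PosSemidef) (hB : (blockMx B).PosSemidef)
    (hC : (blockMx C).PosSemidef) :
    ((Matrix.of fun i j => gmf G χ (A i j + B i j + C i j)) +
        (Matrix.of fun i j => gmf G χ (C i j)) -
        (Matrix.of fun i j => gmf G χ (A i j + C i j)) -
        (Matrix.of fun i j => gmf G χ (B i j + C i j))).PosSemidef := by
  open scoped MatrixOrder in
  obtain ⟨RA, hRA⟩ := CStarAlgebra.nonneg_iff_eq_star_mul_self.mp hA.nonneg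
  open scoped MatrixOrder in
  obtain ⟨RB, hRB⟩ := CStarAlgebra.nonneg_iff_eq_star_mul_self.mp hB.nonneg
  open scoped MatrixOrder in
  obtain ⟨RC, hRC⟩ := CStarAlgebra.nonneg_iff_eq_star_mul_self.mp hC.nonneg
  set N : Fin 3 → Fin m → Fin m → Matrix (Fin n) (Fin n) ℂ := ![A, B, C] with hN
  set R : Fin 3 → Matrix (Fin m × Fin n) (Fin m × Fin n) ℂ := ![RA, RB, RC] with hRdef
  have hgram : ∀ (t : Fin 3) (p q : Fin m) (i j : Fin n),
      N t p q i j = ∑ k : Fin m × Fin n, star (R t k (p, i)) * R t k (q, j) := by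
    have key : ∀ (X : Fin m → Fin m → Matrix (Fin n) (Fin n) ℂ)
        (RX : Matrix (Fin m × Fin n) (Fin m × Fin n) ℂ), blockMx X = RXᴴ * RX →
        ∀ (p q : Fin m) (i j : Fin n),
          X p q i j = ∑ k : Fin m × Fin n, star (RX k (p, i)) * RX k (q, j) := by
      intro X RX h p q i j
      have h2 := congrFun (congrFun h (p, i)) (q, j)
      simpa [blockMx, Matrix.mul_apply, Matrix.conjTranspose_apply] using h2
    intro t
    fin_cases t
    · exact key A RA hRA
    · exact key B RB hRB
    · exact key C RC hRC
  have hχ' : ∀ g : G, star (χ g) * χ g = 1 := by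
    intro g
    rw [Complex.star_def, mul_comm, Complex.mul_conj, Complex.normSq_eq_norm_sq, hχ g]
    norm_num
  set e := permHom (Fin 3) (Fin m × Fin n) G with he
  set Hf : Fin m → ((Fin n → Fin 3) × (Fin n → Fin m × Fin n)) → ℂ :=
    fun p u => ind u.1 * ∏ i, R (u.1 i) (u.2 i) (p, i) with hHf
  have stepB : ∀ (σ : G) (p q : Fin m),
      ∑ u : (Fin n → Fin 3) × (Fin n → Fin m × Fin n), star (Hf p u) * Hf q (e σ u)
        = ∑ f : Fin n → Fin 3, ind f * ∏ i, N (f i) p q i ((σ : Equiv.Perm (Fin n)) i) := by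
    intro σ p q
    rw [Fintype.sum_prod_type]
    refine Finset.sum_congr rfl fun f _ => ?_
    have hper : ∀ w : Fin n → Fin m × Fin n,
        star (Hf p (f, w)) * Hf q (e σ (f, w))
          = ind f * ∏ i, (star (R (f i) (w i) (p, i)) *
              R (f i) (w i) (q, (σ : Equiv.Perm (Fin n)) i)) := by
      intro w
      have happ : e σ (f, w) = (fun j => f ((σ : Equiv.Perm (Fin n))⁻¹ j),
          fun j => w ((σ : Equiv.Perm (Fin n))⁻¹ j)) := rfl
      rw [happ]
      show star (ind f * ∏ i, R (f i) (w i) (p, i))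
          * (ind (fun j => f ((σ : Equiv.Perm (Fin n))⁻¹ j)) *
            ∏ j, R (f ((σ : Equiv.Perm (Fin n))⁻¹ j))
              (w ((σ : Equiv.Perm (Fin n))⁻¹ j)) (q, j)) = _
      rw [ind_comp f ((σ : Equiv.Perm (Fin n))⁻¹)]
      have hprod : ∏ j, R (f ((σ : Equiv.Perm (Fin n))⁻¹ j))
            (w ((σ : Equiv.Perm (Fin n))⁻¹ j)) (q, j)
          = ∏ i, R (f i) (w i) (q, (σ : Equiv.Perm (Fin n)) i) := by
        rw [← Equiv.prod_comp (σ : Equiv.Perm (Fin n))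
          (fun j => R (f ((σ : Equiv.Perm (Fin n))⁻¹ j))
            (w ((σ : Equiv.Perm (Fin n))⁻¹ j)) (q, j))]
        refine Finset.prod_congr rfl fun i _ => ?_
        simp
      rw [hprod, star_mul', ind_star, star_prod, mul_mul_mul_comm, ind_mul_self,
        ← Finset.prod_mul_distrib]
    rw [Finset.sum_congr rfl fun w _ => hper w, ← Finset.mul_sum]
    congr 1
    calc ∑ w : Fin n → Fin m × Fin n,
          ∏ i, (star (R (f i) (w i) (p, i)) * R (f i) (w i) (q, (σ : Equiv.Perm (Fin n)) i))
        = ∏ i, ∑ k : Fin m × Fin n,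
            star (R (f i) k (p, i)) * R (f i) k (q, (σ : Equiv.Perm (Fin n)) i) :=
          (Fintype.prod_sum (κ := fun _ : Fin n => Fin m × Fin n)
            (fun i k => star (R (f i) k (p, i)) *
              R (f i) k (q, (σ : Equiv.Perm (Fin n)) i))).symm
      _ = ∏ i, N (f i) p q i ((σ : Equiv.Perm (Fin n)) i) :=
          Finset.prod_congr rfl fun i _ => (hgram (f i) p q i _).symm
  have expand : ∀ (φ : Fin 3 → ℂ) (p q : Fin m) (σ : Equiv.Perm (Fin n)),
      ∏ i, (∑ t : Fin 3, φ t * N t p q i (σ i))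
        = ∑ f : Fin n → Fin 3, (∏ i, φ (f i)) * ∏ i, N (f i) p q i (σ i) := by
    intro φ p q σ
    rw [Fintype.prod_sum (fun i t => φ t * N t p q i (σ i))]
    exact Finset.sum_congr rfl fun f _ => by rw [Finset.prod_mul_distrib]
  have entry1 : ∀ (p q : Fin m) (i j : Fin n), (A p q + B p q + C p q) i j
      = ∑ t : Fin 3, (![1,1,1] : Fin 3 → ℂ) t * N t p q i j := by
    intro p q i j; simp [hN, Fin.sum_univ_three]
  have entry2 : ∀ (p q : Fin m) (i j : Fin n), C p q i j
      = ∑ t : Fin 3, (![0,0,1] : Fin 3 → ℂ) t * N t p q i j := by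
    intro p q i j; simp [hN, Fin.sum_univ_three]
  have entry3 : ∀ (p q : Fin m) (i j : Fin n), (A p q + C p q) i j
      = ∑ t : Fin 3, (![1,0,1] : Fin 3 → ℂ) t * N t p q i j := by
    intro p q i j; simp [hN, Fin.sum_univ_three]
  have entry4 : ∀ (p q : Fin m) (i j : Fin n), (B p q + C p q) i j
      = ∑ t : Fin 3, (![0,1,1] : Fin 3 → ℂ) t * N t p q i j := by
    intro p q i j; simp [hN, Fin.sum_univ_three]
  have stepA : ∀ p q : Fin m,
      gmf G χ (A p q + B p q + C p q) + gmf G χ (C p q)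
        - gmf G χ (A p q + C p q) - gmf G χ (B p q + C p q)
        = ∑ σ : G, χ σ * ∑ f : Fin n → Fin 3,
            ind f * ∏ i, N (f i) p q i ((σ : Equiv.Perm (Fin n)) i) := by
    intro p q
    unfold gmf
    rw [← Finset.sum_add_distrib, ← Finset.sum_sub_distrib, ← Finset.sum_sub_distrib]
    refine Finset.sum_congr rfl fun σ _ => ?_
    have e1 := calc ∏ i, (A p q + B p q + C p q) i ((σ : Equiv.Perm (Fin n)) i)
        = ∏ i, ∑ t : Fin 3,
            (![1,1,1] : Fin 3 → ℂ) t * N t p q i ((σ : Equiv.Perm (Fin n)) i) :=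
          Finset.prod_congr rfl fun i _ => entry1 p q i _
      _ = ∑ f : Fin n → Fin 3, (∏ i, (![1,1,1] : Fin 3 → ℂ) (f i)) *
            ∏ i, N (f i) p q i ((σ : Equiv.Perm (Fin n)) i) := expand _ p q _
    have e2 := calc ∏ i, C p q i ((σ : Equiv.Perm (Fin n)) i)
        = ∏ i, ∑ t : Fin 3,
            (![0,0,1] : Fin 3 → ℂ) t * N t p q i ((σ : Equiv.Perm (Fin n)) i) :=
          Finset.prod_congr rfl fun i _ => entry2 p q i _
      _ = ∑ f : Fin n → Fin 3, (∏ i, (![0,0,1] : Fin 3 → ℂ) (f i)) *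
            ∏ i, N (f i) p q i ((σ : Equiv.Perm (Fin n)) i) := expand _ p q _
    have e3 := calc ∏ i, (A p q + C p q) i ((σ : Equiv.Perm (Fin n)) i)
        = ∏ i, ∑ t : Fin 3,
            (![1,0,1] : Fin 3 → ℂ) t * N t p q i ((σ : Equiv.Perm (Fin n)) i) :=
          Finset.prod_congr rfl fun i _ => entry3 p q i _
      _ = ∑ f : Fin n → Fin 3, (∏ i, (![1,0,1] : Fin 3 → ℂ) (f i)) *
            ∏ i, N (f i) p q i ((σ : Equiv.Perm (Fin n)) i) := expand _ p q _
    have e4 := calc ∏ i, (B p q + C p q) i ((σ : Equiv.Perm (Fin n)) i)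
        = ∏ i, ∑ t : Fin 3,
            (![0,1,1] : Fin 3 → ℂ) t * N t p q i ((σ : Equiv.Perm (Fin n)) i) :=
          Finset.prod_congr rfl fun i _ => entry4 p q i _
      _ = ∑ f : Fin n → Fin 3, (∏ i, (![0,1,1] : Fin 3 → ℂ) (f i)) *
            ∏ i, N (f i) p q i ((σ : Equiv.Perm (Fin n)) i) := expand _ p q _
    rw [e1, e2, e3, e4, ← mul_add, ← mul_sub, ← mul_sub]
    congr 1
    rw [← Finset.sum_add_distrib, ← Finset.sum_sub_distrib, ← Finset.sum_sub_distrib]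
    refine Finset.sum_congr rfl fun f _ => ?_
    rw [← indicator_eq f]
    have hones : ∏ i, (![1,1,1] : Fin 3 → ℂ) (f i) = ∏ _i : Fin n, (1 : ℂ) :=
      Finset.prod_congr rfl fun i _ => ones_val (f i)
    rw [hones]
    ring
  have hmat : ((Matrix.of fun i j => gmf G χ (A i j + B i j + C i j)) +
        (Matrix.of fun i j => gmf G χ (C i j)) -
        (Matrix.of fun i j => gmf G χ (A i j + C i j)) -
        (Matrix.of fun i j => gmf G χ (B i j + C i j)))
      = Matrix.of (fun p q => ∑ ρ : G, χ ρ *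
          ∑ u : (Fin n → Fin 3) × (Fin n → Fin m × Fin n),
            star (Hf p u) * Hf q (e ρ u)) := by
    ext p q
    simp only [Matrix.sub_apply, Matrix.add_apply, Matrix.of_apply]
    rw [stepA p q]
    exact Finset.sum_congr rfl fun σ _ => by rw [stepB σ p q]
  rw [hmat]
  exact key_psd χ hχ' e Hf
end

section
/- Let A = [A_{i,j}], B = [B_{i,j}], C = [C_{i,j}] be m×m block matrices with n×n complex blocks, each positive semidefinite as mn×mn matrices. Then, in the Loewner order on m×m complex matrices, [det(A_{i,j} + B_{i,j} + C_{i,j})]_{i,j=1}^m + [det(C_{i,j})]_{i,j=1}^m ≥ [det(A_{i,j} + C_{i,j})]_{i,j=1}^m + [det(B_{i,j} + C_{i,j})]_{i,j=1}^m. That is, the determinant is completely strongly superadditive over the cone of positive semidefinite matrices. -/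
open Matrix Finset Equiv
open scoped ComplexOrder

private lemma det_cols {n : ℕ} (X : Matrix (Fin n) (Fin n) ℂ) :
    X.det = ∑ σ : Equiv.Perm (Fin n), ((Equiv.Perm.sign σ : ℤ) : ℂ) * ∏ k, X k (σ k) := by
  rw [← Matrix.det_transpose, Matrix.det_apply']
  simp [Matrix.transpose_apply]

private lemma det_expand_sum {n : ℕ} (S : Finset (Fin 3)) (N : Fin 3 → Matrix (Fin n) (Fin n) ℂ) :
    (∑ t ∈ S, N t).det = ∑ g ∈ Fintype.piFinset (fun _ : Fin n => S),
      Matrix.det (Matrix.of fun k l => N (g k) k l) := by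
  have h : (∑ t ∈ S, N t) = Matrix.of (fun k => ∑ t ∈ S, N t k) := by
    ext k l; simp [Matrix.sum_apply]
  rw [h, Matrix.det]
  exact (Matrix.detRowAlternating (R := ℂ) (n := Fin n)).toMultilinearMap.map_sum_finset
    (fun k t => N t k) (fun _ => S)

private lemma hW_of_psd {n m : ℕ} (A : Fin m → Fin m → Matrix (Fin n) (Fin n) ℂ)
    (hA : (blockMx A).PosSemidef) :
    ∃ W : Matrix (Fin m × Fin n) (Fin m × Fin n) ℂ,
      ∀ i j k l, A i j k l = ∑ r, star (W r (i, k)) * W r (j, l) := by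
  obtain ⟨W, hW⟩ : ∃ W : Matrix (Fin m × Fin n) (Fin m × Fin n) ℂ, blockMx A = Wᴴ * W := by
    open scoped MatrixOrder in
    simpa [star_eq_conjTranspose] using CStarAlgebra.nonneg_iff_eq_star_mul_self.mp hA.nonneg
  refine ⟨W, fun i j k l => ?_⟩
  have := congrFun (congrFun hW (i, k)) (j, l)
  simpa [blockMx, Matrix.mul_apply, Matrix.conjTranspose_apply] using this

private lemma herm_blocks {n m : ℕ} (A : Fin m → Fin m → Matrix (Fin n) (Fin n) ℂ)
    (hA : (blockMx A).PosSemidef) (i j : Fin m) : (A j i)ᴴ = A i j := by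
  ext k l
  have := congrFun (congrFun hA.1 (i, k)) (j, l)
  simpa [blockMx, Matrix.conjTranspose_apply] using this

private lemma core_nonneg {n m : ℕ}
    (M : Fin 3 → (Fin m → Fin m → Matrix (Fin n) (Fin n) ℂ))
    (W : Fin 3 → Matrix (Fin m × Fin n) (Fin m × Fin n) ℂ)
    (hW : ∀ t i j k l, M t i j k l = ∑ r, star (W t r (i, k)) * W t r (j, l))
    (x : Fin m → ℂ) (g : Fin n → Fin 3) :
    0 ≤ ∑ τ : Equiv.Perm (Fin n), ∑ i, ∑ j, star (x i) * x j *
        Matrix.det (Matrix.of fun k l => M (g (τ k)) i j k l) := by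
  classical
  set Z : (Fin n → Fin m × Fin n) → ℂ := fun r => ∑ j, ∑ ρ : Equiv.Perm (Fin n),
    ((Equiv.Perm.sign ρ : ℤ) : ℂ) * x j * ∏ k, W (g k) (r k) (j, ρ k) with hZ
  set P : (Fin n → Fin m × Fin n) → Fin m → Equiv.Perm (Fin n) → ℂ := fun r i π =>
    ((Equiv.Perm.sign π : ℤ) : ℂ) * star (x i) * ∏ k, star (W (g k) (r k) (i, π k)) with hP
  set Q : (Fin n → Fin m × Fin n) → Fin m → Equiv.Perm (Fin n) → ℂ := fun r j ρ =>
    ((Equiv.Perm.sign ρ : ℤ) : ℂ) * x j * ∏ k, W (g k) (r k) (j, ρ k) with hQ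
  have hstarZ : ∀ r, star (Z r) = ∑ i, ∑ π : Equiv.Perm (Fin n), P r i π := by
    intro r
    rw [hZ]
    simp only [star_sum, star_mul', star_prod, star_intCast, hP]
  have h1 : ∀ (τ : Equiv.Perm (Fin n)) (i j : Fin m),
      Matrix.det (Matrix.of fun k l => M (g (τ k)) i j k l)
        = ∑ ρ : Equiv.Perm (Fin n),
            (((Equiv.Perm.sign ρ : ℤ) : ℂ) * ((Equiv.Perm.sign τ : ℤ) : ℂ)) *
            ∏ k, M (g k) i j (τ⁻¹ k) (ρ k) := by
    intro τ i j
    rw [det_cols]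
    refine (Fintype.sum_equiv (Equiv.mulRight τ) _ _ fun ρ => ?_).symm
    have hprod := Equiv.prod_comp (τ⁻¹ : Equiv.Perm (Fin n))
      (fun k => M (g (τ k)) i j k (ρ (τ k)))
    simp only [show ∀ k, τ (τ⁻¹ k) = k from τ.apply_symm_apply] at hprod
    simp only [Equiv.coe_mulRight, Equiv.Perm.mul_apply, Matrix.of_apply, hprod,
      Equiv.Perm.sign_mul, Int.cast_mul, Units.val_mul]
  have key : (∑ τ : Equiv.Perm (Fin n), ∑ i, ∑ j, star (x i) * x j *
        Matrix.det (Matrix.of fun k l => M (g (τ k)) i j k l))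
      = ∑ r : Fin n → Fin m × Fin n, star (Z r) * Z r := by
    calc (∑ τ : Equiv.Perm (Fin n), ∑ i, ∑ j, star (x i) * x j *
            Matrix.det (Matrix.of fun k l => M (g (τ k)) i j k l))
        = ∑ τ : Equiv.Perm (Fin n), ∑ i, ∑ j, star (x i) * x j *
            ∑ ρ : Equiv.Perm (Fin n),
              (((Equiv.Perm.sign ρ : ℤ) : ℂ) * ((Equiv.Perm.sign τ : ℤ) : ℂ)) *
              ∏ k, M (g k) i j (τ⁻¹ k) (ρ k) := by
          simp only [h1]
      _ = ∑ π : Equiv.Perm (Fin n), ∑ i, ∑ j, star (x i) * x j *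
            ∑ ρ : Equiv.Perm (Fin n),
              (((Equiv.Perm.sign ρ : ℤ) : ℂ) * ((Equiv.Perm.sign π : ℤ) : ℂ)) *
              ∏ k, M (g k) i j (π k) (ρ k) := by
          refine (Fintype.sum_equiv (Equiv.inv (Equiv.Perm (Fin n))) _ _ fun π => ?_).symm
          simp
      _ = ∑ π : Equiv.Perm (Fin n), ∑ i, ∑ j, ∑ ρ : Equiv.Perm (Fin n),
            ∑ r : Fin n → Fin m × Fin n, P r i π * Q r j ρ := by
          refine Finset.sum_congr rfl fun π _ => Finset.sum_congr rfl fun i _ =>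
            Finset.sum_congr rfl fun j _ => ?_
          rw [Finset.mul_sum]
          refine Finset.sum_congr rfl fun ρ _ => ?_
          simp only [hW]
          rw [Finset.prod_univ_sum]
          simp only [Fintype.piFinset_univ]
          rw [Finset.mul_sum, Finset.mul_sum]
          refine Finset.sum_congr rfl fun r _ => ?_
          rw [Finset.prod_mul_distrib, hP, hQ]
          ring
      _ = ∑ π : Equiv.Perm (Fin n), ∑ i, ∑ j, ∑ r : Fin n → Fin m × Fin n,
            ∑ ρ : Equiv.Perm (Fin n), P r i π * Q r j ρ :=
          Finset.sum_congr rfl fun π _ => Finset.sum_congr rfl fun i _ =>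
            Finset.sum_congr rfl fun j _ => Finset.sum_comm
      _ = ∑ π : Equiv.Perm (Fin n), ∑ i, ∑ r : Fin n → Fin m × Fin n, ∑ j,
            ∑ ρ : Equiv.Perm (Fin n), P r i π * Q r j ρ :=
          Finset.sum_congr rfl fun π _ => Finset.sum_congr rfl fun i _ => Finset.sum_comm
      _ = ∑ π : Equiv.Perm (Fin n), ∑ r : Fin n → Fin m × Fin n, ∑ i, ∑ j,
            ∑ ρ : Equiv.Perm (Fin n), P r i π * Q r j ρ :=
          Finset.sum_congr rfl fun π _ => Finset.sum_comm
      _ = ∑ r : Fin n → Fin m × Fin n, ∑ π : Equiv.Perm (Fin n), ∑ i, ∑ j,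
            ∑ ρ : Equiv.Perm (Fin n), P r i π * Q r j ρ := Finset.sum_comm
      _ = ∑ r : Fin n → Fin m × Fin n, ∑ i, ∑ π : Equiv.Perm (Fin n), ∑ j,
            ∑ ρ : Equiv.Perm (Fin n), P r i π * Q r j ρ :=
          Finset.sum_congr rfl fun r _ => Finset.sum_comm
      _ = ∑ r : Fin n → Fin m × Fin n, star (Z r) * Z r := by
          refine Finset.sum_congr rfl fun r _ => ?_
          have hz : Z r = ∑ j, ∑ ρ : Equiv.Perm (Fin n), Q r j ρ := by simp only [hZ, hQ]
          rw [hstarZ, hz, Finset.sum_mul_sum]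
          refine Finset.sum_congr rfl fun i _ => ?_
          rw [Finset.sum_comm]
          exact Finset.sum_congr rfl fun j _ => (Finset.sum_mul_sum _ _ _ _).symm
  rw [key]
  exact Finset.sum_nonneg fun r _ => star_mul_self_nonneg (Z r)

private lemma main_quadform {n m : ℕ}
    (A B C : Fin m → Fin m → Matrix (Fin n) (Fin n) ℂ)
    (hA : (blockMx A).PosSemidef) (hB : (blockMx B).PosSemidef)
    (hC : (blockMx C).PosSemidef) (x : Fin m → ℂ)
    (M : Fin 3 → (Fin m → Fin m → Matrix (Fin n) (Fin n) ℂ)) (hM : M = ![A, B, C])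
    (core : ∀ g : Fin n → Fin 3,
      0 ≤ ∑ τ : Equiv.Perm (Fin n), ∑ i, ∑ j, star (x i) * x j *
        Matrix.det (Matrix.of fun k l => M (g (τ k)) i j k l)) :
    0 ≤ star x ⬝ᵥ
      ((Matrix.of fun i j => (A i j + B i j + C i j).det) +
        (Matrix.of fun i j => (C i j).det) -
        (Matrix.of fun i j => (A i j + C i j).det) -
        (Matrix.of fun i j => (B i j + C i j).det)) *ᵥ x := by
  classical
  set T : (Fin n → Fin 3) → ℂ := fun g => ∑ i, ∑ j, star (x i) * x j *
      Matrix.det (Matrix.of fun k l => M (g k) i j k l) with hT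
  set cond : (Fin n → Fin 3) → Prop := fun g => (∃ k, g k = 0) ∧ (∃ k, g k = 1) with hcond
  -- step 1 : the quadratic form equals the sum of T g over g satisfying cond
  have hdet1 : ∀ i j, (A i j + B i j + C i j).det
      = ∑ g ∈ Fintype.piFinset (fun _ : Fin n => (univ : Finset (Fin 3))),
          Matrix.det (Matrix.of fun k l => M (g k) i j k l) := by
    intro i j
    rw [show A i j + B i j + C i j = ∑ t ∈ (univ : Finset (Fin 3)), M t i j by
      simp [hM, Fin.sum_univ_three], det_expand_sum]
  have hdet2 : ∀ i j, (C i j).det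
      = ∑ g ∈ Fintype.piFinset (fun _ : Fin n => ({2} : Finset (Fin 3))),
          Matrix.det (Matrix.of fun k l => M (g k) i j k l) := by
    intro i j
    rw [show C i j = ∑ t ∈ ({2} : Finset (Fin 3)), M t i j by simp [hM], det_expand_sum]
  have hdet3 : ∀ i j, (A i j + C i j).det
      = ∑ g ∈ Fintype.piFinset (fun _ : Fin n => ({0, 2} : Finset (Fin 3))),
          Matrix.det (Matrix.of fun k l => M (g k) i j k l) := by
    intro i j
    rw [show A i j + C i j = ∑ t ∈ ({0, 2} : Finset (Fin 3)), M t i j by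
      rw [Finset.sum_pair (by decide)]; simp [hM], det_expand_sum]
  have hdet4 : ∀ i j, (B i j + C i j).det
      = ∑ g ∈ Fintype.piFinset (fun _ : Fin n => ({1, 2} : Finset (Fin 3))),
          Matrix.det (Matrix.of fun k l => M (g k) i j k l) := by
    intro i j
    rw [show B i j + C i j = ∑ t ∈ ({1, 2} : Finset (Fin 3)), M t i j by
      rw [Finset.sum_pair (by decide)]; simp [hM], det_expand_sum]
  have hTsum : ∀ (S : Finset (Fin 3)),
      (∑ i, ∑ j, star (x i) * ((∑ g ∈ Fintype.piFinset (fun _ : Fin n => S),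
          Matrix.det (Matrix.of fun k l => M (g k) i j k l)) * x j))
        = ∑ g ∈ Fintype.piFinset (fun _ : Fin n => S), T g := by
    intro S
    calc (∑ i, ∑ j, star (x i) * ((∑ g ∈ Fintype.piFinset (fun _ : Fin n => S),
          Matrix.det (Matrix.of fun k l => M (g k) i j k l)) * x j))
        = ∑ i, ∑ j, ∑ g ∈ Fintype.piFinset (fun _ : Fin n => S),
            star (x i) * x j * Matrix.det (Matrix.of fun k l => M (g k) i j k l) := by
          refine Finset.sum_congr rfl fun i _ => Finset.sum_congr rfl fun j _ => ?_
          rw [Finset.sum_mul, Finset.mul_sum]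
          exact Finset.sum_congr rfl fun g _ => by ring
      _ = ∑ i, ∑ g ∈ Fintype.piFinset (fun _ : Fin n => S), ∑ j,
            star (x i) * x j * Matrix.det (Matrix.of fun k l => M (g k) i j k l) :=
          Finset.sum_congr rfl fun i _ => Finset.sum_comm
      _ = ∑ g ∈ Fintype.piFinset (fun _ : Fin n => S), T g := Finset.sum_comm
  have step1 : star x ⬝ᵥ
      ((Matrix.of fun i j => (A i j + B i j + C i j).det) +
        (Matrix.of fun i j => (C i j).det) -
        (Matrix.of fun i j => (A i j + C i j).det) -
        (Matrix.of fun i j => (B i j + C i j).det)) *ᵥ x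
      = ∑ g ∈ Finset.univ.filter cond, T g := by
    have hP : ∀ S : Finset (Fin 3), Fintype.piFinset (fun _ : Fin n => S)
        = Finset.univ.filter (fun g : Fin n → Fin 3 => ∀ k, g k ∈ S) := by
      intro S; ext g; simp [Fintype.mem_piFinset]
    have m2 : ∀ t : Fin 3, t ∈ ({2} : Finset (Fin 3)) ↔ t = 2 := by decide
    have m3 : ∀ t : Fin 3, t ∈ ({0, 2} : Finset (Fin 3)) ↔ t ≠ 1 := by decide
    have m4 : ∀ t : Fin 3, t ∈ ({1, 2} : Finset (Fin 3)) ↔ t ≠ 0 := by decide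
    have ht2 : ∀ t : Fin 3, t ≠ 0 → t ≠ 1 → t = 2 := by decide
    calc star x ⬝ᵥ
      ((Matrix.of fun i j => (A i j + B i j + C i j).det) +
        (Matrix.of fun i j => (C i j).det) -
        (Matrix.of fun i j => (A i j + C i j).det) -
        (Matrix.of fun i j => (B i j + C i j).det)) *ᵥ x
        = ∑ i, ∑ j, (star (x i) * (((A i j + B i j + C i j).det) * x j)
            + star (x i) * (((C i j).det) * x j)
            - star (x i) * (((A i j + C i j).det) * x j)
            - star (x i) * (((B i j + C i j).det) * x j)) := by
          simp only [dotProduct, Matrix.mulVec, Pi.star_apply, Finset.mul_sum]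
          refine Finset.sum_congr rfl fun i _ => Finset.sum_congr rfl fun j _ => ?_
          simp only [Matrix.sub_apply, Matrix.add_apply, Matrix.of_apply]
          ring
      _ = (∑ i, ∑ j, star (x i) * (((A i j + B i j + C i j).det) * x j))
            + (∑ i, ∑ j, star (x i) * (((C i j).det) * x j))
            - (∑ i, ∑ j, star (x i) * (((A i j + C i j).det) * x j))
            - (∑ i, ∑ j, star (x i) * (((B i j + C i j).det) * x j)) := by
          simp only [Finset.sum_add_distrib, Finset.sum_sub_distrib]
      _ = (∑ g ∈ Fintype.piFinset (fun _ : Fin n => (univ : Finset (Fin 3))), T g)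
            + (∑ g ∈ Fintype.piFinset (fun _ : Fin n => ({2} : Finset (Fin 3))), T g)
            - (∑ g ∈ Fintype.piFinset (fun _ : Fin n => ({0, 2} : Finset (Fin 3))), T g)
            - (∑ g ∈ Fintype.piFinset (fun _ : Fin n => ({1, 2} : Finset (Fin 3))), T g) := by
          rw [← hTsum, ← hTsum, ← hTsum, ← hTsum]
          simp only [hdet1, hdet2, hdet3, hdet4]
      _ = ∑ g ∈ Finset.univ.filter cond, T g := by
          simp only [hP, Finset.sum_filter]
          rw [← Finset.sum_add_distrib, ← Finset.sum_sub_distrib, ← Finset.sum_sub_distrib]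
          refine Finset.sum_congr rfl fun g _ => ?_
          by_cases h0 : ∃ k, g k = 0 <;> by_cases h1 : ∃ k, g k = 1
          · obtain ⟨k0, hk0⟩ := h0
            obtain ⟨k1, hk1⟩ := h1
            have n2 : ¬ ∀ k, g k ∈ ({2} : Finset (Fin 3)) := fun h =>
              absurd ((m2 _).1 (h k0)) (by rw [hk0]; decide)
            have n3 : ¬ ∀ k, g k ∈ ({0, 2} : Finset (Fin 3)) := fun h => (m3 _).1 (h k1) hk1
            have n4 : ¬ ∀ k, g k ∈ ({1, 2} : Finset (Fin 3)) := fun h => (m4 _).1 (h k0) hk0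
            rw [if_pos (fun k => Finset.mem_univ (g k)), if_neg n2, if_neg n3, if_neg n4,
              if_pos (show cond g from ⟨⟨k0, hk0⟩, ⟨k1, hk1⟩⟩)]
            ring
          · obtain ⟨k0, hk0⟩ := h0
            push_neg at h1
            have y3 : ∀ k, g k ∈ ({0, 2} : Finset (Fin 3)) := fun k => (m3 _).2 (h1 k)
            have n2 : ¬ ∀ k, g k ∈ ({2} : Finset (Fin 3)) := fun h =>
              absurd ((m2 _).1 (h k0)) (by rw [hk0]; decide)
            have n4 : ¬ ∀ k, g k ∈ ({1, 2} : Finset (Fin 3)) := fun h => (m4 _).1 (h k0) hk0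
            have nc : ¬ cond g := fun h => h1 h.2.choose h.2.choose_spec
            rw [if_pos (fun k => Finset.mem_univ (g k)), if_neg n2, if_pos y3, if_neg n4,
              if_neg nc]
            ring
          · obtain ⟨k1, hk1⟩ := h1
            push_neg at h0
            have y4 : ∀ k, g k ∈ ({1, 2} : Finset (Fin 3)) := fun k => (m4 _).2 (h0 k)
            have n2 : ¬ ∀ k, g k ∈ ({2} : Finset (Fin 3)) := fun h =>
              absurd ((m2 _).1 (h k1)) (by rw [hk1]; decide)
            have n3 : ¬ ∀ k, g k ∈ ({0, 2} : Finset (Fin 3)) := fun h => (m3 _).1 (h k1) hk1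
            have nc : ¬ cond g := fun h => h0 h.1.choose h.1.choose_spec
            rw [if_pos (fun k => Finset.mem_univ (g k)), if_neg n2, if_neg n3, if_pos y4,
              if_neg nc]
            ring
          · push_neg at h0
            push_neg at h1
            have y2 : ∀ k, g k ∈ ({2} : Finset (Fin 3)) := fun k =>
              (m2 _).2 (ht2 _ (h0 k) (h1 k))
            have y3 : ∀ k, g k ∈ ({0, 2} : Finset (Fin 3)) := fun k => (m3 _).2 (h1 k)
            have y4 : ∀ k, g k ∈ ({1, 2} : Finset (Fin 3)) := fun k => (m4 _).2 (h0 k)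
            have nc : ¬ cond g := fun h => h0 h.1.choose h.1.choose_spec
            rw [if_pos (fun k => Finset.mem_univ (g k)), if_pos y2, if_pos y3, if_pos y4,
              if_neg nc]
            ring
  rw [step1]
  -- step 2 : nonnegativity via symmetrization
  have inv_cond : ∀ (τ : Equiv.Perm (Fin n)) (g : Fin n → Fin 3),
      cond (fun k => g (τ k)) ↔ cond g := by
    intro τ g
    constructor
    · rintro ⟨⟨k0, h0⟩, ⟨k1, h1⟩⟩; exact ⟨⟨τ k0, h0⟩, ⟨τ k1, h1⟩⟩
    · rintro ⟨⟨k0, h0⟩, ⟨k1, h1⟩⟩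
      exact ⟨⟨τ.symm k0, by simpa using h0⟩, ⟨τ.symm k1, by simpa using h1⟩⟩
  have step2 : (∑ g ∈ Finset.univ.filter cond, ∑ τ : Equiv.Perm (Fin n), T (fun k => g (τ k)))
      = (n.factorial : ℂ) * (∑ g ∈ Finset.univ.filter cond, T g) := by
    have hτ : ∀ τ : Equiv.Perm (Fin n),
        (∑ g ∈ Finset.univ.filter cond, T (fun k => g (τ k)))
          = ∑ g ∈ Finset.univ.filter cond, T g := by
      intro τ
      refine Finset.sum_equiv (Equiv.arrowCongr τ.symm (Equiv.refl (Fin 3))) ?_ ?_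
      · intro g
        simp only [Finset.mem_filter, Finset.mem_univ, true_and]
        rw [← inv_cond τ g]
        constructor <;> intro h <;> convert h using 2 <;>
          · simp [Equiv.arrowCongr]
      · intro g _
        congr 1
    calc (∑ g ∈ Finset.univ.filter cond, ∑ τ : Equiv.Perm (Fin n), T (fun k => g (τ k)))
        = ∑ τ : Equiv.Perm (Fin n), ∑ g ∈ Finset.univ.filter cond, T (fun k => g (τ k)) :=
          Finset.sum_comm
      _ = ∑ τ : Equiv.Perm (Fin n), ∑ g ∈ Finset.univ.filter cond, T g :=
          Finset.sum_congr rfl fun τ _ => hτ τ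
      _ = (n.factorial : ℂ) * (∑ g ∈ Finset.univ.filter cond, T g) := by
          rw [Finset.sum_const, Finset.card_univ, Fintype.card_perm, Fintype.card_fin,
            nsmul_eq_mul]
  have step3 : 0 ≤ ∑ g ∈ Finset.univ.filter cond, ∑ τ : Equiv.Perm (Fin n),
      T (fun k => g (τ k)) := by
    refine Finset.sum_nonneg fun g _ => ?_
    simpa [hT] using core g
  rw [step2] at step3
  have hfac : (0:ℝ) < (n.factorial : ℝ) := by positivity
  have h2 : (0:ℂ) ≤ (((n.factorial : ℝ)⁻¹ : ℝ) : ℂ) :=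
    Complex.zero_le_real.mpr (by positivity)
  have h3 := mul_nonneg h2 step3
  rw [← mul_assoc] at h3
  have h4 : (((n.factorial : ℝ)⁻¹ : ℝ) : ℂ) * (n.factorial : ℂ) = 1 := by
    push_cast
    field_simp
  rwa [h4, one_mul] at h3

/-- The determinant is completely strongly superadditive over the cone of
positive semidefinite matrices. -/
theorem det_completely_strongly_superadditive {n m : ℕ}
    (A B C : Fin m → Fin m → Matrix (Fin n) (Fin n) ℂ)
    (hA : (blockMx A).PosSemidef) (hB : (blockMx B).PosSemidef)
    (hC : (blockMx C).PosSemidef) :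
    ((Matrix.of fun i j => (A i j + B i j + C i j).det) +
        (Matrix.of fun i j => (C i j).det) -
        (Matrix.of fun i j => (A i j + C i j).det) -
        (Matrix.of fun i j => (B i j + C i j).det)).PosSemidef := by
  classical
  have hH1 : ∀ i j : Fin m, star ((A j i + B j i + C j i).det) = (A i j + B i j + C i j).det := by
    intro i j
    rw [← Matrix.det_conjTranspose, Matrix.conjTranspose_add, Matrix.conjTranspose_add,
      herm_blocks A hA, herm_blocks B hB, herm_blocks C hC]
  have hH2 : ∀ i j : Fin m, star ((C j i).det) = (C i j).det := by
    intro i j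
    rw [← Matrix.det_conjTranspose, herm_blocks C hC]
  have hH3 : ∀ i j : Fin m, star ((A j i + C j i).det) = (A i j + C i j).det := by
    intro i j
    rw [← Matrix.det_conjTranspose, Matrix.conjTranspose_add,
      herm_blocks A hA, herm_blocks C hC]
  have hH4 : ∀ i j : Fin m, star ((B j i + C j i).det) = (B i j + C i j).det := by
    intro i j
    rw [← Matrix.det_conjTranspose, Matrix.conjTranspose_add,
      herm_blocks B hB, herm_blocks C hC]
  refine posSemidef_iff_dotProduct_mulVec.mpr ⟨?_, ?_⟩
  · show _ = _
    ext i j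
    simp only [Matrix.conjTranspose_apply, Matrix.sub_apply, Matrix.add_apply, Matrix.of_apply,
      star_sub, star_add, hH1 i j, hH2 i j, hH3 i j, hH4 i j]
  · intro x
    obtain ⟨WA, hWA⟩ := hW_of_psd A hA
    obtain ⟨WB, hWB⟩ := hW_of_psd B hB
    obtain ⟨WC, hWC⟩ := hW_of_psd C hC
    have hW : ∀ t i j k l, (![A, B, C]) t i j k l
        = ∑ r, star ((![WA, WB, WC]) t r (i, k)) * (![WA, WB, WC]) t r (j, l) := by
      intro t i j k l
      fin_cases t
      · exact hWA i j k l
      · exact hWB i j k l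
      · exact hWC i j k l
    exact main_quadform A B C hA hB hC x ![A, B, C] rfl
      (fun g => core_nonneg ![A, B, C] ![WA, WB, WC] hW x g)
end

section
/- Let A = [A_{i,j}], B = [B_{i,j}], C = [C_{i,j}] be m×m block matrices with n×n complex blocks, each positive semidefinite as mn×mn matrices. Then, in the Loewner order on m×m complex matrices, [per(A_{i,j} + B_{i,j} + C_{i,j})]_{i,j=1}^m + [per(C_{i,j})]_{i,j=1}^m ≥ [per(A_{i,j} + C_{i,j})]_{i,j=1}^m + [per(B_{i,j} + C_{i,j})]_{i,j=1}^m. That is, the permanent is completely strongly superadditive over the cone of positive semidefinite matrices. -/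
open Matrix
open scoped ComplexOrder

/-- scaling a PSD complex matrix by a nonneg real keeps it PSD -/
lemma psd_smul_real {m : Type*} [Fintype m] {M : Matrix m m ℂ} (hM : M.PosSemidef)
    {r : ℝ} (hr : 0 ≤ r) : ((r : ℂ) • M).PosSemidef := by
  refine Matrix.PosSemidef.of_dotProduct_mulVec_nonneg ?_ ?_
  · show ((r:ℂ) • M)ᴴ = _
    rw [Matrix.conjTranspose_smul, hM.1.eq]
    congr 1
    simp [Complex.star_def, Complex.conj_ofReal]
  · intro x
    rw [Matrix.smul_mulVec, dotProduct_smul, smul_eq_mul]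
    exact mul_nonneg (Complex.zero_le_real.mpr hr) (hM.dotProduct_mulVec_nonneg x)

/-- The symmetrized permanent-type Gram matrix is positive semidefinite. -/
lemma gram_perm_psd {m n : ℕ} {D : Type*} [Fintype D] [DecidableEq D]
    (φ : D → Fin m → Fin n → ℂ) (Hs : Finset (Fin n → D))
    (hinv : ∀ (τ : Equiv.Perm (Fin n)) (h : Fin n → D), h ∈ Hs → h ∘ ⇑τ ∈ Hs) :
    (Matrix.of fun i j : Fin m =>
       ∑ h ∈ Hs, ∑ σ : Equiv.Perm (Fin n),
         ∏ p, star (φ (h p) i (σ p)) * φ (h p) j p).PosSemidef := by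
  classical
  set Yf : (Fin n → D) → Fin m → ℂ := fun h i => ∏ p, φ (h p) i p with hYf
  set Vf : (Fin n → D) → Fin m → ℂ := fun h i => ∑ σ : Equiv.Perm (Fin n), Yf (h ∘ ⇑σ) i with hVf
  have hiff : ∀ (τ : Equiv.Perm (Fin n)) (h : Fin n → D), h ∈ Hs ↔ h ∘ ⇑τ ∈ Hs := by
    intro τ h
    refine ⟨hinv τ h, fun hh => ?_⟩
    have := hinv τ⁻¹ _ hh
    simpa [Function.comp_assoc, Function.comp_def] using this
  -- T h = star (Vf h i) * Yf h j
  have hT : ∀ (i j : Fin m) (h : Fin n → D),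
      (∑ σ : Equiv.Perm (Fin n), ∏ p, star (φ (h p) i (σ p)) * φ (h p) j p)
        = star (Vf h i) * Yf h j := by
    intro i j h
    have h1 : ∀ σ : Equiv.Perm (Fin n),
        (∏ p, star (φ (h p) i (σ p)) * φ (h p) j p)
          = star (Yf (h ∘ ⇑σ⁻¹) i) * Yf h j := by
      intro σ
      rw [Finset.prod_mul_distrib]
      congr 1
      rw [← star_prod]
      congr 1
      calc ∏ p, φ (h p) i (σ p)
          = ∏ p, (fun q => φ (h (σ⁻¹ q)) i q) (σ p) := by
            refine Finset.prod_congr rfl fun p _ => ?_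
            simp
        _ = ∏ q, φ (h (σ⁻¹ q)) i q := Equiv.prod_comp σ (fun q => φ (h (σ⁻¹ q)) i q)
        _ = Yf (h ∘ ⇑σ⁻¹) i := rfl
    simp_rw [h1]
    rw [← Finset.sum_mul]
    congr 1
    rw [hVf]
    rw [star_sum]
    exact Fintype.sum_equiv (Equiv.inv (Equiv.Perm (Fin n))) _ _ (fun σ => rfl)
  have hVinv : ∀ (τ : Equiv.Perm (Fin n)) (h : Fin n → D) (i : Fin m), Vf (h ∘ ⇑τ) i = Vf h i := by
    intro τ h i
    rw [hVf]
    refine Fintype.sum_equiv (Equiv.mulLeft τ) _ _ fun σ => ?_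
    have : (h ∘ ⇑τ) ∘ ⇑σ = h ∘ ⇑((Equiv.mulLeft τ) σ) := by
      funext x; simp [Equiv.Perm.mul_apply]
    rw [this]
  have hstep : ∀ (τ : Equiv.Perm (Fin n)) (i j : Fin m),
      (∑ h ∈ Hs, star (Vf h i) * Yf h j) = ∑ h ∈ Hs, star (Vf h i) * Yf (h ∘ ⇑τ) j := by
    intro τ i j
    refine Finset.sum_equiv ⟨fun h => h ∘ ⇑τ⁻¹, fun h => h ∘ ⇑τ, ?_, ?_⟩ ?_ ?_
    · intro h; funext x; simp
    · intro h; funext x; simp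
    · intro h; exact hiff τ⁻¹ h
    · intro h hh
      simp only [Equiv.coe_fn_mk]
      rw [hVinv τ⁻¹ h i]
      congr 2
      funext x; simp
  have hcount : ∀ i j : Fin m,
      ((Nat.factorial n) : ℂ) * (∑ h ∈ Hs, star (Vf h i) * Yf h j) = ∑ h ∈ Hs, star (Vf h i) * Vf h j := by
    intro i j
    have h2 : ∑ _τ : Equiv.Perm (Fin n), (∑ h ∈ Hs, star (Vf h i) * Yf h j)
        = ∑ h ∈ Hs, star (Vf h i) * Vf h j := by
      calc ∑ τ : Equiv.Perm (Fin n), (∑ h ∈ Hs, star (Vf h i) * Yf h j)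
          = ∑ τ : Equiv.Perm (Fin n), ∑ h ∈ Hs, star (Vf h i) * Yf (h ∘ ⇑τ) j :=
            Finset.sum_congr rfl fun τ _ => hstep τ i j
        _ = ∑ h ∈ Hs, ∑ τ : Equiv.Perm (Fin n), star (Vf h i) * Yf (h ∘ ⇑τ) j := Finset.sum_comm
        _ = ∑ h ∈ Hs, star (Vf h i) * Vf h j := by
            refine Finset.sum_congr rfl fun h _ => ?_
            rw [← Finset.mul_sum]
    rw [← h2, Finset.sum_const, nsmul_eq_mul]
    congr 1
    simp [Finset.card_univ, Fintype.card_perm, Fintype.card_fin]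
  have hfacpos : (0:ℝ) ≤ (((Nat.factorial n) : ℝ))⁻¹ := by positivity
  have hmat : (Matrix.of fun i j : Fin m => ∑ h ∈ Hs, ∑ σ : Equiv.Perm (Fin n),
        ∏ p, star (φ (h p) i (σ p)) * φ (h p) j p)
      = (((((Nat.factorial n) : ℝ))⁻¹ : ℝ) : ℂ) • Matrix.of (fun i j : Fin m => ∑ h ∈ Hs, star (Vf h i) * Vf h j) := by
    ext i j
    simp only [Matrix.of_apply, Matrix.smul_apply, smul_eq_mul]
    rw [← hcount i j, ← mul_assoc]
    rw [show (((((Nat.factorial n) : ℝ))⁻¹ : ℝ) : ℂ) * ((Nat.factorial n) : ℂ) = 1 by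
      have : (((Nat.factorial n) : ℝ)) ≠ 0 := by positivity
      push_cast
      field_simp]
    rw [one_mul]
    exact Finset.sum_congr rfl fun h _ => hT i j h
  rw [hmat]
  apply psd_smul_real _ hfacpos
  let N : Matrix {h // h ∈ Hs} (Fin m) ℂ := Matrix.of fun h i => Vf h.1 i
  have hps := Matrix.posSemidef_conjTranspose_mul_self N
  have hNG : Nᴴ * N = Matrix.of (fun i j : Fin m => ∑ h ∈ Hs, star (Vf h i) * Vf h j) := by
    ext i j
    rw [Matrix.mul_apply, Matrix.of_apply, ← Finset.sum_coe_sort Hs (fun h => star (Vf h i) * Vf h j)]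
    refine Finset.sum_congr rfl fun h _ => ?_
    simp [N, Matrix.conjTranspose_apply]
  rwa [hNG] at hps

/-- The permanent is completely strongly superadditive over the cone of
positive semidefinite matrices. -/
theorem permanent_completely_strongly_superadditive {n m : ℕ}
    (A B C : Fin m → Fin m → Matrix (Fin n) (Fin n) ℂ)
    (hA : (blockMx A).PosSemidef) (hB : (blockMx B).PosSemidef)
    (hC : (blockMx C).PosSemidef) :
    ((Matrix.of fun i j => (A i j + B i j + C i j).permanent) +
        (Matrix.of fun i j => (C i j).permanent) -
        (Matrix.of fun i j => (A i j + C i j).permanent) -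
        (Matrix.of fun i j => (B i j + C i j).permanent)).PosSemidef := by
  classical
  obtain ⟨U, hU⟩ : ∃ U : Matrix (Fin m × Fin n) (Fin m × Fin n) ℂ, blockMx A = Uᴴ * U := by
    open scoped MatrixOrder in exact CStarAlgebra.nonneg_iff_eq_star_mul_self.mp hA.nonneg
  obtain ⟨V, hV⟩ : ∃ V : Matrix (Fin m × Fin n) (Fin m × Fin n) ℂ, blockMx B = Vᴴ * V := by
    open scoped MatrixOrder in exact CStarAlgebra.nonneg_iff_eq_star_mul_self.mp hB.nonneg
  obtain ⟨W, hW⟩ : ∃ W : Matrix (Fin m × Fin n) (Fin m × Fin n) ℂ, blockMx C = Wᴴ * W := by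
    open scoped MatrixOrder in exact CStarAlgebra.nonneg_iff_eq_star_mul_self.mp hC.nonneg
  set X : Fin 3 → Matrix (Fin m × Fin n) (Fin m × Fin n) ℂ := ![U, V, W] with hX
  set Mk : Fin 3 → (Fin m → Fin m → Matrix (Fin n) (Fin n) ℂ) := ![A, B, C] with hMkdef
  have hMk : ∀ (k : Fin 3) (i j : Fin m) (p q : Fin n),
      Mk k i j p q = ∑ r : Fin m × Fin n, star (X k r (i, p)) * X k r (j, q) := by
    intro k i j p q
    fin_cases k
    · have := congrFun (congrFun hU (i, p)) (j, q)
      simpa [blockMx, Matrix.mul_apply, Matrix.conjTranspose_apply, hX, hMkdef] using this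
    · have := congrFun (congrFun hV (i, p)) (j, q)
      simpa [blockMx, Matrix.mul_apply, Matrix.conjTranspose_apply, hX, hMkdef] using this
    · have := congrFun (congrFun hW (i, p)) (j, q)
      simpa [blockMx, Matrix.mul_apply, Matrix.conjTranspose_apply, hX, hMkdef] using this
  set φ : (Fin 3 × (Fin m × Fin n)) → Fin m → Fin n → ℂ := fun d i q => X d.1 d.2 (i, q) with hφ
  have key : ∀ (s : Finset (Fin 3)) (i j : Fin m) (p q : Fin n),
      (∑ k ∈ s, Mk k i j p q) = ∑ d ∈ s ×ˢ (Finset.univ : Finset (Fin m × Fin n)),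
        star (φ d i p) * φ d j q := by
    intro s i j p q
    rw [Finset.sum_product]
    exact Finset.sum_congr rfl fun k _ => hMk k i j p q
  have perS : ∀ (s : Finset (Fin 3)) (i j : Fin m),
      (Matrix.of fun p q => ∑ k ∈ s, Mk k i j p q : Matrix (Fin n) (Fin n) ℂ).permanent
        = ∑ h ∈ Fintype.piFinset (fun _ : Fin n => s ×ˢ (Finset.univ : Finset (Fin m × Fin n))),
            ∑ σ : Equiv.Perm (Fin n), ∏ p, star (φ (h p) i (σ p)) * φ (h p) j p := by
    intro s i j
    show (∑ σ : Equiv.Perm (Fin n),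
        ∏ p, (Matrix.of fun p q => ∑ k ∈ s, Mk k i j p q : Matrix (Fin n) (Fin n) ℂ) (σ p) p) = _
    have hσ : ∀ σ : Equiv.Perm (Fin n),
        (∏ p, (Matrix.of fun p q => ∑ k ∈ s, Mk k i j p q : Matrix (Fin n) (Fin n) ℂ) (σ p) p)
          = ∑ h ∈ Fintype.piFinset (fun _ : Fin n => s ×ˢ (Finset.univ : Finset (Fin m × Fin n))),
              ∏ p, star (φ (h p) i (σ p)) * φ (h p) j p := by
      intro σ
      rw [show (∏ p, (Matrix.of fun p q => ∑ k ∈ s, Mk k i j p q : Matrix (Fin n) (Fin n) ℂ) (σ p) p)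
            = ∏ p, ∑ d ∈ s ×ˢ (Finset.univ : Finset (Fin m × Fin n)),
                star (φ d i (σ p)) * φ d j p from
        Finset.prod_congr rfl fun p _ => by rw [Matrix.of_apply]; exact key s i j (σ p) p]
      exact Finset.prod_univ_sum _ _
    rw [Finset.sum_congr rfl fun σ _ => hσ σ]
    exact Finset.sum_comm
  have e012 : ∀ i j, A i j + B i j + C i j
      = Matrix.of fun p q => ∑ k ∈ (Finset.univ : Finset (Fin 3)), Mk k i j p q := by
    intro i j; ext p q
    simp [Fin.sum_univ_three, hMkdef]
  have e02 : ∀ i j, A i j + C i j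
      = Matrix.of fun p q => ∑ k ∈ ({0, 2} : Finset (Fin 3)), Mk k i j p q := by
    intro i j; ext p q
    rw [Matrix.of_apply, Finset.sum_pair (by decide : (0 : Fin 3) ≠ 2)]
    simp [hMkdef]
  have e12 : ∀ i j, B i j + C i j
      = Matrix.of fun p q => ∑ k ∈ ({1, 2} : Finset (Fin 3)), Mk k i j p q := by
    intro i j; ext p q
    rw [Matrix.of_apply, Finset.sum_pair (by decide : (1 : Fin 3) ≠ 2)]
    simp [hMkdef]
  have e2 : ∀ i j, C i j
      = Matrix.of fun p q => ∑ k ∈ ({2} : Finset (Fin 3)), Mk k i j p q := by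
    intro i j; ext p q
    rw [Matrix.of_apply, Finset.sum_singleton]
    simp [hMkdef]
  have hpi : ∀ s : Finset (Fin 3),
      Fintype.piFinset (fun _ : Fin n => s ×ˢ (Finset.univ : Finset (Fin m × Fin n)))
        = Finset.univ.filter (fun h : Fin n → Fin 3 × (Fin m × Fin n) => ∀ p, (h p).1 ∈ s) := by
    intro s; ext h
    rw [Fintype.mem_piFinset, Finset.mem_filter]
    simp only [Finset.mem_product, Finset.mem_univ, and_true, true_and]
  set Hs : Finset (Fin n → Fin 3 × (Fin m × Fin n)) :=
    Finset.univ.filter (fun h => (∃ p, (h p).1 = 0) ∧ (∃ p, (h p).1 = 1)) with hHs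
  have hexp : ((Matrix.of fun i j => (A i j + B i j + C i j).permanent) +
        (Matrix.of fun i j => (C i j).permanent) -
        (Matrix.of fun i j => (A i j + C i j).permanent) -
        (Matrix.of fun i j => (B i j + C i j).permanent))
      = Matrix.of fun i j : Fin m => ∑ h ∈ Hs, ∑ σ : Equiv.Perm (Fin n),
          ∏ p, star (φ (h p) i (σ p)) * φ (h p) j p := by
    ext i j
    simp only [Matrix.sub_apply, Matrix.add_apply, Matrix.of_apply]
    rw [e012 i j, e02 i j, e12 i j, e2 i j, perS, perS, perS, perS, hpi, hpi, hpi, hpi, hHs]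
    rw [Finset.sum_filter, Finset.sum_filter, Finset.sum_filter, Finset.sum_filter,
      Finset.sum_filter]
    rw [← Finset.sum_add_distrib, ← Finset.sum_sub_distrib, ← Finset.sum_sub_distrib]
    refine Finset.sum_congr rfl fun h _ => ?_
    have ctrue : ∀ p : Fin n, (h p).1 ∈ (Finset.univ : Finset (Fin 3)) :=
      fun p => Finset.mem_univ _
    rw [if_pos ctrue]
    have c02 : (∀ p : Fin n, (h p).1 ∈ ({0, 2} : Finset (Fin 3))) ↔ ¬ (∃ p, (h p).1 = 1) := by
      rw [not_exists]
      refine forall_congr' fun p => ?_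
      exact (by decide : ∀ x : Fin 3, (x ∈ ({0, 2} : Finset (Fin 3))) ↔ ¬ (x = 1)) _
    have c12 : (∀ p : Fin n, (h p).1 ∈ ({1, 2} : Finset (Fin 3))) ↔ ¬ (∃ p, (h p).1 = 0) := by
      rw [not_exists]
      refine forall_congr' fun p => ?_
      exact (by decide : ∀ x : Fin 3, (x ∈ ({1, 2} : Finset (Fin 3))) ↔ ¬ (x = 0)) _
    have c2 : (∀ p : Fin n, (h p).1 ∈ ({2} : Finset (Fin 3)))
        ↔ (¬ (∃ p, (h p).1 = 0) ∧ ¬ (∃ p, (h p).1 = 1)) := by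
      rw [not_exists, not_exists, ← forall_and]
      refine forall_congr' fun p => ?_
      exact (by decide : ∀ x : Fin 3, (x ∈ ({2} : Finset (Fin 3))) ↔ (¬ (x = 0) ∧ ¬ (x = 1))) _
    by_cases h0 : ∃ p, (h p).1 = 0 <;> by_cases h1 : ∃ p, (h p).1 = 1
    · rw [if_neg (fun hP => (c2.mp hP).2 h1), if_neg (fun hP => c02.mp hP h1),
        if_neg (fun hP => c12.mp hP h0), if_pos ⟨h0, h1⟩]
      ring
    · rw [if_neg (fun hP => (c2.mp hP).1 h0), if_pos (c02.mpr h1),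
        if_neg (fun hP => c12.mp hP h0), if_neg (fun hc => h1 hc.2)]
      ring
    · rw [if_neg (fun hP => (c2.mp hP).2 h1), if_neg (fun hP => c02.mp hP h1),
        if_pos (c12.mpr h0), if_neg (fun hc => h0 hc.1)]
      ring
    · rw [if_pos (c2.mpr ⟨h0, h1⟩), if_pos (c02.mpr h1), if_pos (c12.mpr h0),
        if_neg (fun hc => h0 hc.1)]
      ring
  rw [hexp]
  apply gram_perm_psd
  intro τ h hh
  rw [hHs, Finset.mem_filter] at hh ⊢
  obtain ⟨-, ⟨p, hp⟩, ⟨q, hq⟩⟩ := hh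
  exact ⟨Finset.mem_univ _, ⟨τ⁻¹ p, by simpa using hp⟩, ⟨τ⁻¹ q, by simpa using hq⟩⟩
end

section
/- Let A, B, C be positive semidefinite n×n complex matrices. Then det(A + B + C) + det(C) ≥ det(A + C) + det(B + C), where all determinants are (nonnegative) real numbers. That is, the determinant is strongly superadditive over the cone of positive semidefinite matrices. -/
open Matrix
open scoped ComplexOrder

section AuxDetSuper
open Finset

namespace DetSuper

variable {n : ℕ}

noncomputable def F (v : Fin 3 × Fin n → Fin n → ℂ) (g : Fin n → Fin 3 × Fin n) : ℂ :=
  (∏ i, (starRingEnd ℂ) (v (g i) i)) * (Matrix.of fun i j => v (g i) j).det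

lemma aux_expand (v : Fin 3 × Fin n → Fin n → ℂ) (d : Fin 3 → ℂ) :
    (Matrix.of fun i j => ∑ p : Fin 3 × Fin n, d p.1 * ((starRingEnd ℂ) (v p i) * v p j)).det
      = ∑ g : Fin n → Fin 3 × Fin n, (∏ i, d (g i).1) * F v g := by
  have h1 : (Matrix.of fun i j => ∑ p : Fin 3 × Fin n, d p.1 * ((starRingEnd ℂ) (v p i) * v p j))
      = Matrix.of (fun i => ∑ p : Fin 3 × Fin n, (d p.1 * (starRingEnd ℂ) (v p i)) • v p) := by
    ext i j
    simp [Finset.sum_apply, mul_assoc]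
  rw [h1]
  show (Matrix.detRowAlternating
      (fun i => ∑ p : Fin 3 × Fin n, (d p.1 * (starRingEnd ℂ) (v p i)) • v p) : ℂ) = _
  rw [show (fun i => ∑ p : Fin 3 × Fin n, (d p.1 * (starRingEnd ℂ) (v p i)) • v p)
      = (fun i => ∑ p : Fin 3 × Fin n, (fun (i : Fin n) (p : Fin 3 × Fin n) =>
          (d p.1 * (starRingEnd ℂ) (v p i)) • v p) i p) from rfl]
  have hs := (Matrix.detRowAlternating (R := ℂ) (n := Fin n)).toMultilinearMap.map_sum
      (g := fun (i : Fin n) (p : Fin 3 × Fin n) => (d p.1 * (starRingEnd ℂ) (v p i)) • v p)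
  simp only [AlternatingMap.coe_multilinearMap] at hs
  rw [hs]
  refine Finset.sum_congr rfl fun g _ => ?_
  show Matrix.detRowAlternating
      (fun i => (d (g i).1 * (starRingEnd ℂ) (v (g i) i)) • v (g i)) = _
  have hm := (Matrix.detRowAlternating (R := ℂ) (n := Fin n)).toMultilinearMap.map_smul_univ
      (fun i => d (g i).1 * (starRingEnd ℂ) (v (g i) i)) (fun i => v (g i))
  simp only [AlternatingMap.coe_multilinearMap] at hm
  rw [hm]
  rw [Finset.prod_mul_distrib, smul_eq_mul, F, mul_assoc]
  rfl

end DetSuper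

namespace DetSuper

lemma aux_orbit (v : Fin 3 × Fin n → Fin n → ℂ) (g : Fin n → Fin 3 × Fin n) :
    ∑ σ : Equiv.Perm (Fin n), F v (g ∘ σ)
      = star ((Matrix.of fun i j => v (g i) j).det) * (Matrix.of fun i j => v (g i) j).det := by
  have h1 : ∀ σ : Equiv.Perm (Fin n), F v (g ∘ σ)
      = (((Equiv.Perm.sign σ : ℤ) : ℂ)
          * ∏ i, (starRingEnd ℂ) ((Matrix.of fun i j => v (g i) j) (σ i) i))
          * (Matrix.of fun i j => v (g i) j).det := by
    intro σ
    have h2 : (Matrix.of fun i j => v ((g ∘ σ) i) j)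
        = (Matrix.of fun i j => v (g i) j).submatrix σ id := rfl
    show (∏ i, (starRingEnd ℂ) (v ((g ∘ σ) i) i)) * (Matrix.of fun i j => v ((g ∘ σ) i) j).det = _
    rw [h2, Matrix.det_permute]
    simp only [Matrix.of_apply, Function.comp_apply]
    ring
  have hstar : star ((Matrix.of fun i j => v (g i) j).det)
      = ∑ σ : Equiv.Perm (Fin n), ((Equiv.Perm.sign σ : ℤ) : ℂ)
          * ∏ i, (starRingEnd ℂ) ((Matrix.of fun i j => v (g i) j) (σ i) i) := by
    rw [show (star ((Matrix.of fun i j => v (g i) j).det) : ℂ)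
        = (starRingEnd ℂ) ((Matrix.of fun i j => v (g i) j).det) from rfl]
    rw [Matrix.det_apply', map_sum]
    refine Finset.sum_congr rfl fun σ _ => ?_
    rw [_root_.map_mul, map_prod, map_intCast]
  rw [hstar, Finset.sum_mul]
  exact Finset.sum_congr rfl fun σ _ => h1 σ

lemma aux_sym (v : Fin 3 × Fin n → Fin n → ℂ) (S : Finset (Fin n → Fin 3 × Fin n))
    (hS : ∀ (σ : Equiv.Perm (Fin n)) g, g ∈ S → g ∘ σ ∈ S) :
    0 ≤ ∑ g ∈ S, F v g := by
  have key : 0 ≤ ∑ g ∈ S, ∑ σ : Equiv.Perm (Fin n), F v (g ∘ σ) := by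
    refine Finset.sum_nonneg fun g _ => ?_
    rw [aux_orbit]
    exact star_mul_self_nonneg _
  have hswap : ∑ g ∈ S, ∑ σ : Equiv.Perm (Fin n), F v (g ∘ σ)
      = (Fintype.card (Equiv.Perm (Fin n))) • ∑ g ∈ S, F v g := by
    rw [Finset.sum_comm]
    have hinner : ∀ σ : Equiv.Perm (Fin n), ∑ g ∈ S, F v (g ∘ σ) = ∑ g ∈ S, F v g := by
      intro σ
      refine Finset.sum_nbij' (fun g => g ∘ σ) (fun g => g ∘ σ.symm) (fun g hg => hS σ g hg)
        (fun g hg => hS σ.symm g hg) ?_ ?_ ?_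
      · intro g _; funext x; simp
      · intro g _; funext x; simp
      · intro g _; rfl
    rw [Finset.sum_congr rfl fun σ _ => hinner σ, Finset.sum_const, Finset.card_univ]
  rw [hswap, nsmul_eq_mul] at key
  set c := Fintype.card (Equiv.Perm (Fin n)) with hc
  have hcpos : 0 < c := Fintype.card_pos
  have h0 : (0:ℝ) ≤ ((c:ℝ))⁻¹ := by positivity
  calc (0:ℂ) = (((c:ℝ))⁻¹ : ℂ) * 0 := by ring
    _ ≤ (((c:ℝ))⁻¹ : ℂ) * ((c:ℂ) * ∑ g ∈ S, F v g) := by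
        apply mul_le_mul_of_nonneg_left key
        exact_mod_cast Complex.zero_le_real.mpr h0
    _ = ∑ g ∈ S, F v g := by
        push_cast
        rw [← mul_assoc, inv_mul_cancel₀, one_mul]
        exact_mod_cast hcpos.ne'

end DetSuper

end AuxDetSuper

section
open Finset

/-- The determinant is strongly superadditive over the cone of positive
semidefinite matrices. -/
theorem det_strongly_superadditive {n : ℕ} (A B C : Matrix (Fin n) (Fin n) ℂ)
    (hA : A.PosSemidef) (hB : B.PosSemidef) (hC : C.PosSemidef) :
    (A + C).det + (B + C).det ≤ (A + B + C).det + C.det := by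
  classical
  obtain ⟨P, hP⟩ : ∃ P : Matrix (Fin n) (Fin n) ℂ, A = Pᴴ * P := by
    open scoped MatrixOrder in exact CStarAlgebra.nonneg_iff_eq_star_mul_self.mp hA.nonneg
  obtain ⟨Q, hQ⟩ : ∃ Q : Matrix (Fin n) (Fin n) ℂ, B = Qᴴ * Q := by
    open scoped MatrixOrder in exact CStarAlgebra.nonneg_iff_eq_star_mul_self.mp hB.nonneg
  obtain ⟨R, hR⟩ : ∃ R : Matrix (Fin n) (Fin n) ℂ, C = Rᴴ * R := by
    open scoped MatrixOrder in exact CStarAlgebra.nonneg_iff_eq_star_mul_self.mp hC.nonneg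
  set v : Fin 3 × Fin n → Fin n → ℂ := fun p => ![P, Q, R] p.1 p.2 with hv
  have hexp : ∀ d : Fin 3 → ℂ,
      (Matrix.of fun i j => ∑ p : Fin 3 × Fin n, d p.1 * ((starRingEnd ℂ) (v p i) * v p j))
        = d 0 • A + d 1 • B + d 2 • C := by
    intro d
    ext i j
    simp only [Matrix.of_apply, Fintype.sum_prod_type, Fin.sum_univ_three, hv,
      Matrix.add_apply, Matrix.smul_apply, smul_eq_mul, hP, hQ, hR, Matrix.mul_apply,
      Matrix.conjTranspose_apply, Matrix.cons_val_zero, Matrix.cons_val_one, Matrix.head_cons,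
      Matrix.cons_val_two, Matrix.tail_cons, Finset.mul_sum]
    simp [RCLike.star_def]
  have e1 : (A + B + C).det
      = ∑ g : Fin n → Fin 3 × Fin n, (∏ i, (![1,1,1] : Fin 3 → ℂ) (g i).1) * DetSuper.F v g := by
    rw [show A + B + C = Matrix.of fun i j => ∑ p : Fin 3 × Fin n,
        (![1,1,1] : Fin 3 → ℂ) p.1 * ((starRingEnd ℂ) (v p i) * v p j) by
      rw [hexp]; simp]
    exact DetSuper.aux_expand v _
  have e2 : (A + C).det
      = ∑ g : Fin n → Fin 3 × Fin n, (∏ i, (![1,0,1] : Fin 3 → ℂ) (g i).1) * DetSuper.F v g := by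
    rw [show A + C = Matrix.of fun i j => ∑ p : Fin 3 × Fin n,
        (![1,0,1] : Fin 3 → ℂ) p.1 * ((starRingEnd ℂ) (v p i) * v p j) by
      rw [hexp]; simp]
    exact DetSuper.aux_expand v _
  have e3 : (B + C).det
      = ∑ g : Fin n → Fin 3 × Fin n, (∏ i, (![0,1,1] : Fin 3 → ℂ) (g i).1) * DetSuper.F v g := by
    rw [show B + C = Matrix.of fun i j => ∑ p : Fin 3 × Fin n,
        (![0,1,1] : Fin 3 → ℂ) p.1 * ((starRingEnd ℂ) (v p i) * v p j) by
      rw [hexp]; simp]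
    exact DetSuper.aux_expand v _
  have e4 : C.det
      = ∑ g : Fin n → Fin 3 × Fin n, (∏ i, (![0,0,1] : Fin 3 → ℂ) (g i).1) * DetSuper.F v g := by
    rw [show C = Matrix.of fun i j => ∑ p : Fin 3 × Fin n,
        (![0,0,1] : Fin 3 → ℂ) p.1 * ((starRingEnd ℂ) (v p i) * v p j) by
      rw [hexp]; simp]
    exact DetSuper.aux_expand v _
  rw [← sub_nonneg, e1, e2, e3, e4]
  have hcomb : ∀ g : Fin n → Fin 3 × Fin n,
      ((∏ i, (![1,1,1] : Fin 3 → ℂ) (g i).1) * DetSuper.F v g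
        + (∏ i, (![0,0,1] : Fin 3 → ℂ) (g i).1) * DetSuper.F v g)
      - ((∏ i, (![1,0,1] : Fin 3 → ℂ) (g i).1) * DetSuper.F v g
        + (∏ i, (![0,1,1] : Fin 3 → ℂ) (g i).1) * DetSuper.F v g)
      = if (∃ i, (g i).1 = 0) ∧ (∃ i, (g i).1 = 1) then DetSuper.F v g else 0 := by
    intro g
    have w1 : ∏ i, (![1,1,1] : Fin 3 → ℂ) (g i).1 = 1 := by
      refine Finset.prod_eq_one fun i _ => ?_
      have : ∀ x : Fin 3, (![1,1,1] : Fin 3 → ℂ) x = 1 := by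
        intro x; fin_cases x <;> simp
      exact this _
    by_cases h0 : ∃ i, (g i).1 = 0 <;> by_cases h1 : ∃ i, (g i).1 = 1
    · -- both: AC coeff 0, BC coeff 0, C coeff 0
      obtain ⟨i0, hi0⟩ := h0; obtain ⟨i1, hi1⟩ := h1
      have w2 : ∏ i, (![1,0,1] : Fin 3 → ℂ) (g i).1 = 0 :=
        Finset.prod_eq_zero (Finset.mem_univ i1) (by rw [hi1]; simp)
      have w3 : ∏ i, (![0,1,1] : Fin 3 → ℂ) (g i).1 = 0 :=
        Finset.prod_eq_zero (Finset.mem_univ i0) (by rw [hi0]; simp)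
      have w4 : ∏ i, (![0,0,1] : Fin 3 → ℂ) (g i).1 = 0 :=
        Finset.prod_eq_zero (Finset.mem_univ i0) (by rw [hi0]; simp)
      rw [w1, w2, w3, w4, if_pos ⟨⟨i0, hi0⟩, ⟨i1, hi1⟩⟩]; ring
    · obtain ⟨i0, hi0⟩ := h0
      have w2 : ∏ i, (![1,0,1] : Fin 3 → ℂ) (g i).1 = 1 := by
        refine Finset.prod_eq_one fun i _ => ?_
        have hne : (g i).1 ≠ 1 := fun h => h1 ⟨i, h⟩
        revert hne
        have : ∀ x : Fin 3, x ≠ 1 → (![1,0,1] : Fin 3 → ℂ) x = 1 := by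
          intro x; fin_cases x <;> simp
        exact this _
      have w3 : ∏ i, (![0,1,1] : Fin 3 → ℂ) (g i).1 = 0 :=
        Finset.prod_eq_zero (Finset.mem_univ i0) (by rw [hi0]; simp)
      have w4 : ∏ i, (![0,0,1] : Fin 3 → ℂ) (g i).1 = 0 :=
        Finset.prod_eq_zero (Finset.mem_univ i0) (by rw [hi0]; simp)
      rw [w1, w2, w3, w4, if_neg (by tauto)]; ring
    · obtain ⟨i1, hi1⟩ := h1
      have w2 : ∏ i, (![1,0,1] : Fin 3 → ℂ) (g i).1 = 0 :=
        Finset.prod_eq_zero (Finset.mem_univ i1) (by rw [hi1]; simp)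
      have w3 : ∏ i, (![0,1,1] : Fin 3 → ℂ) (g i).1 = 1 := by
        refine Finset.prod_eq_one fun i _ => ?_
        have hne : (g i).1 ≠ 0 := fun h => h0 ⟨i, h⟩
        revert hne
        have : ∀ x : Fin 3, x ≠ 0 → (![0,1,1] : Fin 3 → ℂ) x = 1 := by
          intro x; fin_cases x <;> simp
        exact this _
      have w4 : ∏ i, (![0,0,1] : Fin 3 → ℂ) (g i).1 = 0 :=
        Finset.prod_eq_zero (Finset.mem_univ i1) (by rw [hi1]; simp)
      rw [w1, w2, w3, w4, if_neg (by tauto)]; ring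
    · have w2 : ∏ i, (![1,0,1] : Fin 3 → ℂ) (g i).1 = 1 := by
        refine Finset.prod_eq_one fun i _ => ?_
        have hne : (g i).1 ≠ 1 := fun h => h1 ⟨i, h⟩
        revert hne
        have : ∀ x : Fin 3, x ≠ 1 → (![1,0,1] : Fin 3 → ℂ) x = 1 := by
          intro x; fin_cases x <;> simp
        exact this _
      have w3 : ∏ i, (![0,1,1] : Fin 3 → ℂ) (g i).1 = 1 := by
        refine Finset.prod_eq_one fun i _ => ?_
        have hne : (g i).1 ≠ 0 := fun h => h0 ⟨i, h⟩
        revert hne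
        have : ∀ x : Fin 3, x ≠ 0 → (![0,1,1] : Fin 3 → ℂ) x = 1 := by
          intro x; fin_cases x <;> simp
        exact this _
      have w4 : ∏ i, (![0,0,1] : Fin 3 → ℂ) (g i).1 = 1 := by
        refine Finset.prod_eq_one fun i _ => ?_
        have hne0 : (g i).1 ≠ 0 := fun h => h0 ⟨i, h⟩
        have hne1 : (g i).1 ≠ 1 := fun h => h1 ⟨i, h⟩
        revert hne0 hne1
        have : ∀ x : Fin 3, x ≠ 0 → x ≠ 1 → (![0,0,1] : Fin 3 → ℂ) x = 1 := by
          intro x; fin_cases x <;> simp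
        exact this _
      rw [w1, w2, w3, w4, if_neg (by tauto)]; ring
  calc (0:ℂ) ≤ ∑ g ∈ Finset.univ.filter
        (fun g : Fin n → Fin 3 × Fin n => (∃ i, (g i).1 = 0) ∧ (∃ i, (g i).1 = 1)),
        DetSuper.F v g := by
        refine DetSuper.aux_sym v _ fun σ g hg => ?_
        simp only [Finset.mem_filter, Finset.mem_univ, true_and] at hg ⊢
        obtain ⟨⟨i0, hi0⟩, ⟨i1, hi1⟩⟩ := hg
        exact ⟨⟨σ.symm i0, by simpa using hi0⟩, ⟨σ.symm i1, by simpa using hi1⟩⟩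
    _ = _ := by
        rw [Finset.sum_filter]
        rw [← Finset.sum_add_distrib, ← Finset.sum_add_distrib, ← Finset.sum_sub_distrib]
        exact Finset.sum_congr rfl fun g _ => (hcomb g).symm

end
end

section
/- Let G be a subgroup of the symmetric group S_n and let χ : G → ℂ be a character of degree 1 (a group homomorphism into the complex numbers whose values have modulus one). Let A, B, C be positive semidefinite n×n complex matrices. Then d_χ^G(A + B + C) + d_χ^G(C) ≥ d_χ^G(A + C) + d_χ^G(B + C), where all four quantities are (nonnegative) real numbers. -/
open Matrix
open scoped ComplexOrder

open Finset
open scoped Classical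

namespace GMFAux
variable {n : ℕ}
abbrev Tι (n : ℕ) := Fin 3 × Fin n
abbrev Tf (n : ℕ) := Fin n → Tι n

def cE (ρ : Equiv.Perm (Fin n)) : Tf n ≃ Tf n where
  toFun f := f ∘ ρ
  invFun f := f ∘ ⇑ρ⁻¹
  left_inv f := by funext i; simp
  right_inv f := by funext i; simp

noncomputable def Bf (G : Subgroup (Equiv.Perm (Fin n))) (χ : G →* ℂ)
    (u v : Tf n → ℂ) : ℂ :=
  ∑ σ : G, χ σ * ∑ f : Tf n, (starRingEnd ℂ) (u (f ∘ (σ : Equiv.Perm (Fin n)))) * v f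

variable (G : Subgroup (Equiv.Perm (Fin n))) (χ : G →* ℂ)

lemma shift (v : Tf n → ℂ) (τ ρ : Equiv.Perm (Fin n)) :
    ∑ f : Tf n, (starRingEnd ℂ) (v (f ∘ τ)) * v (f ∘ ρ)
      = ∑ f : Tf n, (starRingEnd ℂ) (v (f ∘ ⇑(ρ⁻¹ * τ))) * v f := by
  apply Fintype.sum_equiv (cE ρ)
  intro f
  have h1 : (cE ρ f) ∘ ⇑(ρ⁻¹ * τ) = f ∘ ⇑τ := by
    funext i; simp [cE, Equiv.Perm.mul_apply]
  have h2 : (cE ρ f) = f ∘ ⇑ρ := rfl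
  rw [h1, h2]

lemma Bf_self_nonneg (hχ : ∀ g : G, ‖χ g‖ = 1) (v : Tf n → ℂ) :
    0 ≤ Bf G χ v v := by
  have unit : ∀ ρ : G, χ ρ * (starRingEnd ℂ) (χ ρ) = 1 := by
    intro ρ; rw [Complex.mul_conj, Complex.normSq_eq_norm_sq, hχ]; norm_num
  set L : Equiv.Perm (Fin n) → ℂ :=
    fun π => ∑ f : Tf n, (starRingEnd ℂ) (v (f ∘ π)) * v f with hL
  set w : Tf n → ℂ :=
    fun f => ∑ τ : G, (starRingEnd ℂ) (χ τ) * v (f ∘ (τ : Equiv.Perm (Fin n))) with hw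
  have expand : ∀ f, (starRingEnd ℂ) (w f) * w f
      = ∑ τ : G, ∑ ρ : G, (χ τ * (starRingEnd ℂ) (χ ρ))
          * ((starRingEnd ℂ) (v (f ∘ (τ : Equiv.Perm (Fin n))))
              * v (f ∘ (ρ : Equiv.Perm (Fin n)))) := by
    intro f
    rw [hw, map_sum, Finset.sum_mul_sum]
    
    refine Finset.sum_congr rfl fun τ _ => Finset.sum_congr rfl fun ρ _ => ?_
    simp only [_root_.map_mul, Complex.conj_conj]
    ring
  have main : ∑ f : Tf n, (starRingEnd ℂ) (w f) * w f
      = (Fintype.card G : ℂ) * Bf G χ v v := by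
    have hBf : Bf G χ v v = ∑ σ : G, χ σ * L ↑σ := rfl
    calc ∑ f : Tf n, (starRingEnd ℂ) (w f) * w f
        = ∑ f : Tf n, ∑ τ : G, ∑ ρ : G, (χ τ * (starRingEnd ℂ) (χ ρ))
            * ((starRingEnd ℂ) (v (f ∘ (τ : Equiv.Perm (Fin n))))
                * v (f ∘ (ρ : Equiv.Perm (Fin n)))) :=
          Finset.sum_congr rfl fun f _ => expand f
      _ = ∑ τ : G, ∑ ρ : G, (χ τ * (starRingEnd ℂ) (χ ρ))
            * ∑ f : Tf n, (starRingEnd ℂ) (v (f ∘ (τ : Equiv.Perm (Fin n))))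
                * v (f ∘ (ρ : Equiv.Perm (Fin n))) := by
          rw [Finset.sum_comm]
          refine Finset.sum_congr rfl fun τ _ => ?_
          rw [Finset.sum_comm]
          refine Finset.sum_congr rfl fun ρ _ => ?_
          rw [Finset.mul_sum]
      _ = ∑ τ : G, ∑ ρ : G, (χ τ * (starRingEnd ℂ) (χ ρ))
            * L ((ρ : Equiv.Perm (Fin n))⁻¹ * (τ : Equiv.Perm (Fin n))) := by
          refine Finset.sum_congr rfl fun τ _ => Finset.sum_congr rfl fun ρ _ => ?_
          rw [shift]
      _ = ∑ ρ : G, ∑ τ : G, (χ τ * (starRingEnd ℂ) (χ ρ))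
            * L ((ρ : Equiv.Perm (Fin n))⁻¹ * (τ : Equiv.Perm (Fin n))) :=
          Finset.sum_comm
      _ = ∑ ρ : G, ∑ σ : G, χ σ * L ↑σ := by
          refine Finset.sum_congr rfl fun ρ _ => ?_
          have hconj : (starRingEnd ℂ) (χ ρ) = χ ρ⁻¹ := by
            have h1 : χ ρ⁻¹ * χ ρ = 1 := by
              rw [← _root_.map_mul, inv_mul_cancel, _root_.map_one]
            calc (starRingEnd ℂ) (χ ρ) = (χ ρ⁻¹ * χ ρ) * (starRingEnd ℂ) (χ ρ) := by
                  rw [h1, one_mul]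
              _ = χ ρ⁻¹ * (χ ρ * (starRingEnd ℂ) (χ ρ)) := by ring
              _ = χ ρ⁻¹ := by rw [unit ρ, mul_one]
          refine Fintype.sum_equiv (Equiv.mulLeft ρ⁻¹) _ _ fun σ => ?_
          have he : (Equiv.mulLeft ρ⁻¹) σ = ρ⁻¹ * σ := rfl
          have hc : ((ρ⁻¹ * σ : G) : Equiv.Perm (Fin n))
              = (ρ : Equiv.Perm (Fin n))⁻¹ * (σ : Equiv.Perm (Fin n)) := rfl
          rw [he, hc, _root_.map_mul]
          have h2 : χ ρ⁻¹ = (starRingEnd ℂ) (χ ρ) := hconj.symm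
          rw [h2]
          ring
      _ = (Fintype.card G : ℂ) * Bf G χ v v := by
          rw [Finset.sum_const, hBf, Finset.card_univ, nsmul_eq_mul]
  have h1 : 0 ≤ ∑ f : Tf n, (starRingEnd ℂ) (w f) * w f :=
    Finset.sum_nonneg fun f _ => by
      rw [starRingEnd_apply]
      exact star_mul_self_nonneg (w f)
  have hcpos : (0:ℝ) < (Fintype.card G : ℝ) := by
    exact_mod_cast Fintype.card_pos
  have hinv : (0:ℂ) ≤ (((Fintype.card G : ℝ)⁻¹ : ℝ) : ℂ) :=
    Complex.zero_le_real.mpr (by positivity)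
  have hne : ((Fintype.card G : ℕ) : ℂ) ≠ 0 := by
    exact_mod_cast Fintype.card_pos.ne'
  have hcast : (((Fintype.card G : ℝ)⁻¹ : ℝ) : ℂ) = ((Fintype.card G : ℕ) : ℂ)⁻¹ := by
    push_cast
    rfl
  have hB : Bf G χ v v = (((Fintype.card G : ℝ)⁻¹ : ℝ) : ℂ)
      * ((Fintype.card G : ℂ) * Bf G χ v v) := by
    rw [hcast, inv_mul_cancel_left₀ hne]
  rw [hB, ← main]
  exact mul_nonneg hinv h1


/-- the two-family expansion:  ∑_f conj(∏ Y i (f (σ i))) ∏ Z i (f i) = ∏ i ⟨Y i, Z (σ i)⟩ -/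
lemma sum_conj_comp (Y Z : Fin n → Tι n → ℂ) (σ : Equiv.Perm (Fin n)) :
    ∑ f : Tf n, (starRingEnd ℂ) (∏ i, Y i (f (σ i))) * ∏ i, Z i (f i)
      = ∏ i, ∑ x : Tι n, (starRingEnd ℂ) (Y i x) * Z (σ i) x := by
  have step1 : ∀ f : Tf n, (starRingEnd ℂ) (∏ i, Y i (f (σ i))) * ∏ i, Z i (f i)
      = ∏ j, ((starRingEnd ℂ) (Y (σ⁻¹ j) (f j)) * Z j (f j)) := by
    intro f
    rw [map_prod, Finset.prod_mul_distrib]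
    congr 1
    rw [← Equiv.prod_comp σ (fun j => (starRingEnd ℂ) (Y (σ⁻¹ j) (f j)))]
    exact Finset.prod_congr rfl fun i _ => by rw [Equiv.Perm.inv_def, Equiv.symm_apply_apply]
  calc ∑ f : Tf n, (starRingEnd ℂ) (∏ i, Y i (f (σ i))) * ∏ i, Z i (f i)
      = ∑ f : Tf n, ∏ j, ((starRingEnd ℂ) (Y (σ⁻¹ j) (f j)) * Z j (f j)) :=
        Finset.sum_congr rfl fun f _ => step1 f
    _ = ∏ j, ∑ x : Tι n, (starRingEnd ℂ) (Y (σ⁻¹ j) x) * Z j x :=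
        (Fintype.prod_sum fun j x => (starRingEnd ℂ) (Y (σ⁻¹ j) x) * Z j x).symm
    _ = ∏ i, ∑ x : Tι n, (starRingEnd ℂ) (Y i x) * Z (σ i) x := by
        rw [← Equiv.prod_comp σ (fun j => ∑ x : Tι n, (starRingEnd ℂ) (Y (σ⁻¹ j) x) * Z j x)]
        refine Finset.prod_congr rfl fun i _ => ?_
        rw [Equiv.Perm.inv_def, Equiv.symm_apply_apply]


def Wf (fam : Fin 3 → Fin n → Fin n → ℂ) (t : Fin 3) (i : Fin n) (x : Tι n) : ℂ :=
  if x.1 = t then fam t i x.2 else 0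

def ug (fam : Fin 3 → Fin n → Fin n → ℂ) (g : Fin n → Fin 3) : Tf n → ℂ :=
  fun f => ∏ i, Wf fam (g i) i (f i)

def Vf (fam : Fin 3 → Fin n → Fin n → ℂ) : Tf n → ℂ :=
  fun f => ∏ i, fam (f i).1 i (f i).2

lemma Wf_sum (fam : Fin 3 → Fin n → Fin n → ℂ) (i : Fin n) (x : Tι n) :
    ∑ t : Fin 3, Wf fam t i x = fam x.1 i x.2 := by
  simp [Wf]

lemma Vf_eq_sum_ug (fam : Fin 3 → Fin n → Fin n → ℂ) :
    Vf fam = ∑ g : Fin n → Fin 3, ug fam g := by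
  funext f
  rw [Finset.sum_apply]
  have h1 : Vf fam f = ∏ i, ∑ t : Fin 3, Wf fam t i (f i) :=
    Finset.prod_congr rfl fun i _ => (Wf_sum fam i (f i)).symm
  rw [h1, Fintype.prod_sum]
  rfl

lemma Wf_inner (fam fam' : Fin 3 → Fin n → Fin n → ℂ) (t t' : Fin 3) (i j : Fin n) :
    ∑ x : Tι n, (starRingEnd ℂ) (Wf fam t i x) * Wf fam' t' j x
      = if t = t' then ∑ k, (starRingEnd ℂ) (fam t i k) * fam' t' j k else 0 := by
  rw [Fintype.sum_prod_type]
  rw [Finset.sum_eq_single t]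
  · by_cases h : t = t'
    · subst h; simp [Wf]
    · simp [Wf, h]
  · intro b _ hb
    apply Finset.sum_eq_zero
    intro k _
    simp [Wf, hb]
  · intro habs
    exact absurd (Finset.mem_univ t) habs


def Kc (g : Fin n → Fin 3) : ℕ × ℕ :=
  ((univ.filter fun i => g i = 0).card, (univ.filter fun i => g i = 1).card)

lemma Kc_comp (g : Fin n → Fin 3) (σ : Equiv.Perm (Fin n)) :
    Kc (g ∘ σ) = Kc g := by
  have h : ∀ t : Fin 3, (univ.filter fun i => g (σ i) = t).card
      = (univ.filter fun i => g i = t).card := by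
    intro t
    apply Finset.card_bij' (fun i _ => σ i) (fun j _ => σ⁻¹ j) <;> intros <;> simp_all
  simp only [Kc, Function.comp_apply, h]

lemma ug_ortho (fam : Fin 3 → Fin n → Fin n → ℂ) {g g' : Fin n → Fin 3}
    (h : Kc g ≠ Kc g') :
    Bf G χ (ug fam g) (ug fam g') = 0 := by
  rw [Bf]
  apply Finset.sum_eq_zero
  intro σ _
  have hs : ∑ f : Tf n, (starRingEnd ℂ) (ug fam g (f ∘ (σ : Equiv.Perm (Fin n)))) * ug fam g' f
      = ∏ i, ∑ x : Tι n, (starRingEnd ℂ) (Wf fam (g i) i x)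
          * Wf fam (g' ((σ : Equiv.Perm (Fin n)) i)) ((σ : Equiv.Perm (Fin n)) i) x :=
    sum_conj_comp (fun i => Wf fam (g i) i) (fun i => Wf fam (g' i) i) (σ : Equiv.Perm (Fin n))
  rw [hs]
  have hex : ∃ i, g i ≠ g' ((σ : Equiv.Perm (Fin n)) i) := by
    by_contra hc
    push_neg at hc
    have hgg : g = g' ∘ (σ : Equiv.Perm (Fin n)) := funext hc
    rw [hgg, Kc_comp] at h
    exact h rfl
  obtain ⟨i, hi⟩ := hex
  rw [Finset.prod_eq_zero (Finset.mem_univ i)]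
  · exact mul_zero _
  · rw [Wf_inner]
    simp [hi]

lemma Bf_sum_left {γ : Type*} (s : Finset γ) (u : γ → Tf n → ℂ) (v : Tf n → ℂ) :
    Bf G χ (∑ g ∈ s, u g) v = ∑ g ∈ s, Bf G χ (u g) v := by
  unfold Bf
  conv_rhs => rw [Finset.sum_comm]
  refine Finset.sum_congr rfl fun σ _ => ?_
  rw [← Finset.mul_sum]
  congr 1
  rw [Finset.sum_comm]
  refine Finset.sum_congr rfl fun f _ => ?_
  rw [Finset.sum_apply, map_sum, Finset.sum_mul]

lemma Bf_sum_right {γ : Type*} (s : Finset γ) (u : Tf n → ℂ) (v : γ → Tf n → ℂ) :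
    Bf G χ u (∑ g ∈ s, v g) = ∑ g ∈ s, Bf G χ u (v g) := by
  unfold Bf
  conv_rhs => rw [Finset.sum_comm]
  refine Finset.sum_congr rfl fun σ _ => ?_
  rw [← Finset.mul_sum]
  congr 1
  rw [Finset.sum_comm]
  refine Finset.sum_congr rfl fun f _ => ?_
  rw [Finset.sum_apply, Finset.mul_sum]


lemma gmf_eq_Bf (X : Matrix (Fin n) (Fin n) ℂ) (Z : Fin n → Tι n → ℂ)
    (hX : ∀ i j, X i j = ∑ x : Tι n, (starRingEnd ℂ) (Z i x) * Z j x) :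
    gmf G χ X = Bf G χ (fun f => ∏ i, Z i (f i)) (fun f => ∏ i, Z i (f i)) := by
  unfold gmf Bf
  refine Finset.sum_congr rfl fun σ _ => ?_
  congr 1
  have h1 : ∑ f : Tf n, (starRingEnd ℂ) (∏ i, Z i ((f ∘ (σ : Equiv.Perm (Fin n))) i))
        * ∏ i, Z i (f i)
      = ∏ i, ∑ x : Tι n, (starRingEnd ℂ) (Z i x) * Z ((σ : Equiv.Perm (Fin n)) i) x :=
    sum_conj_comp Z Z (σ : Equiv.Perm (Fin n))
  rw [h1]
  exact Finset.prod_congr rfl fun i _ => hX i ((σ : Equiv.Perm (Fin n)) i)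

lemma Dnonneg (hχ : ∀ g : G, ‖χ g‖ = 1)
    (fam : Fin 3 → Fin n → Fin n → ℂ) (s : Finset (Fin n → Fin 3)) :
    0 ≤ ∑ g ∈ s, ∑ g' ∈ s, Bf G χ (ug fam g) (ug fam g') := by
  have e : Bf G χ (∑ g ∈ s, ug fam g) (∑ g ∈ s, ug fam g)
      = ∑ g ∈ s, ∑ g' ∈ s, Bf G χ (ug fam g) (ug fam g') := by
    rw [Bf_sum_left]
    exact Finset.sum_congr rfl fun g _ => Bf_sum_right G χ s _ _
  rw [← e]
  exact Bf_self_nonneg G χ hχ _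

noncomputable def satS (p : ℕ × ℕ → Prop) : Finset (Fin n → Fin 3) :=
  univ.filter fun g => p (Kc g)

noncomputable def Sg (fam : Fin 3 → Fin n → Fin n → ℂ) (g : Fin n → Fin 3) : ℂ :=
  ∑ g' ∈ univ.filter (fun g' => Kc g' = Kc g), Bf G χ (ug fam g) (ug fam g')

lemma sum_satS (fam : Fin 3 → Fin n → Fin n → ℂ) (p : ℕ × ℕ → Prop) :
    ∑ g ∈ satS (n := n) p, ∑ g' ∈ satS (n := n) p, Bf G χ (ug fam g) (ug fam g')
      = ∑ g ∈ satS (n := n) p, Sg G χ fam g := by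
  refine Finset.sum_congr rfl fun g hg => ?_
  have hKg : p (Kc g) := (Finset.mem_filter.mp hg).2
  have h1 : ∑ g' ∈ (satS (n := n) p).filter (fun g' => Kc g' = Kc g),
        Bf G χ (ug fam g) (ug fam g')
      = ∑ g' ∈ satS (n := n) p, Bf G χ (ug fam g) (ug fam g') := by
    apply Finset.sum_filter_of_ne
    intro g' _ hne
    by_contra hK
    exact hne (ug_ortho G χ fam (fun h => hK h.symm))
  have h2 : (satS (n := n) p).filter (fun g' => Kc g' = Kc g)
      = univ.filter (fun g' => Kc g' = Kc g) := by
    ext g'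
    simp only [satS, Finset.mem_filter, Finset.mem_univ, true_and]
    constructor
    · rintro ⟨_, h⟩; exact h
    · intro h; exact ⟨by rw [h]; exact hKg, h⟩
  rw [← h1, h2, Sg]

lemma satS_nonneg (hχ : ∀ g : G, ‖χ g‖ = 1)
    (fam : Fin 3 → Fin n → Fin n → ℂ) (p : ℕ × ℕ → Prop) :
    0 ≤ ∑ g ∈ satS (n := n) p, Sg G χ fam g := by
  rw [← sum_satS]
  exact Dnonneg G χ hχ fam _

lemma fin3_cases : ∀ t : Fin 3, t = 0 ∨ t = 1 ∨ t = 2 := by decide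

lemma ug_zero (fam : Fin 3 → Fin n → Fin n → ℂ) (g : Fin n → Fin 3) (t0 : Fin 3)
    (hfam : fam t0 = fun _ _ => 0) (i0 : Fin n) (hg : g i0 = t0) :
    ug fam g = 0 := by
  funext f
  show (∏ i, Wf fam (g i) i (f i)) = 0
  apply Finset.prod_eq_zero (Finset.mem_univ i0)
  rw [hg, Wf, hfam]
  simp

lemma ug_congr (fam fam' : Fin 3 → Fin n → Fin n → ℂ) (g : Fin n → Fin 3)
    (h : ∀ i, fam (g i) = fam' (g i)) : ug fam g = ug fam' g := by
  funext f
  refine Finset.prod_congr rfl fun i _ => ?_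
  rw [Wf, Wf, h i]

theorem main (hχ : ∀ g : G, ‖χ g‖ = 1)
    (A B C : Matrix (Fin n) (Fin n) ℂ)
    (hA : A.PosSemidef) (hB : B.PosSemidef) (hC : C.PosSemidef) :
    gmf G χ (A + C) + gmf G χ (B + C) ≤ gmf G χ (A + B + C) + gmf G χ C := by
  classical
  obtain ⟨Ma, hMa⟩ : ∃ M : Matrix (Fin n) (Fin n) ℂ, A = Mᴴ * M := by
    open scoped MatrixOrder in exact CStarAlgebra.nonneg_iff_eq_star_mul_self.mp hA.nonneg
  obtain ⟨Mb, hMb⟩ : ∃ M : Matrix (Fin n) (Fin n) ℂ, B = Mᴴ * M := by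
    open scoped MatrixOrder in exact CStarAlgebra.nonneg_iff_eq_star_mul_self.mp hB.nonneg
  obtain ⟨Mc, hMc⟩ : ∃ M : Matrix (Fin n) (Fin n) ℂ, C = Mᴴ * M := by
    open scoped MatrixOrder in exact CStarAlgebra.nonneg_iff_eq_star_mul_self.mp hC.nonneg
  set a : Fin n → Fin n → ℂ := fun i k => Ma k i with ha_def
  set b : Fin n → Fin n → ℂ := fun i k => Mb k i with hb_def
  set c : Fin n → Fin n → ℂ := fun i k => Mc k i with hc_def
  have ha : ∀ i j, A i j = ∑ k, (starRingEnd ℂ) (a i k) * a j k := by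
    intro i j
    rw [hMa, Matrix.mul_apply]
    exact Finset.sum_congr rfl fun k _ => by rw [Matrix.conjTranspose_apply]; rfl
  have hb : ∀ i j, B i j = ∑ k, (starRingEnd ℂ) (b i k) * b j k := by
    intro i j
    rw [hMb, Matrix.mul_apply]
    exact Finset.sum_congr rfl fun k _ => by rw [Matrix.conjTranspose_apply]; rfl
  have hc : ∀ i j, C i j = ∑ k, (starRingEnd ℂ) (c i k) * c j k := by
    intro i j
    rw [hMc, Matrix.mul_apply]
    exact Finset.sum_congr rfl fun k _ => by rw [Matrix.conjTranspose_apply]; rfl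
  set zf : Fin n → Fin n → ℂ := fun _ _ => 0 with hzf
  set fABC : Fin 3 → Fin n → Fin n → ℂ := ![a, b, c] with hfABC
  set fAC : Fin 3 → Fin n → Fin n → ℂ := ![a, zf, c] with hfAC
  set fBC : Fin 3 → Fin n → Fin n → ℂ := ![zf, b, c] with hfBC
  set fC : Fin 3 → Fin n → Fin n → ℂ := ![zf, zf, c] with hfC
  -- generic gram expansion over Tι
  have gram : ∀ (fam : Fin 3 → Fin n → Fin n → ℂ) (X : Matrix (Fin n) (Fin n) ℂ),
      (∀ i j, X i j = (∑ k, (starRingEnd ℂ) (fam 0 i k) * fam 0 j k)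
        + (∑ k, (starRingEnd ℂ) (fam 1 i k) * fam 1 j k)
        + (∑ k, (starRingEnd ℂ) (fam 2 i k) * fam 2 j k)) →
      ∀ i j, X i j = ∑ x : Tι n, (starRingEnd ℂ) (fam x.1 i x.2) * fam x.1 j x.2 := by
    intro fam X h i j
    rw [h i j, Fintype.sum_prod_type, Fin.sum_univ_three]
  have hzsum : ∀ i j : Fin n, (∑ k, (starRingEnd ℂ) (zf i k) * zf j k) = 0 := by
    intro i j; simp [hzf]
  have hABC : ∀ i j, (A + B + C) i j
      = ∑ x : Tι n, (starRingEnd ℂ) (fABC x.1 i x.2) * fABC x.1 j x.2 := by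
    apply gram
    intro i j
    have e0 : fABC 0 = a := rfl
    have e1 : fABC 1 = b := rfl
    have e2 : fABC 2 = c := rfl
    rw [e0, e1, e2, ← ha i j, ← hb i j, ← hc i j]
    simp [Matrix.add_apply]
  have hAC : ∀ i j, (A + C) i j
      = ∑ x : Tι n, (starRingEnd ℂ) (fAC x.1 i x.2) * fAC x.1 j x.2 := by
    apply gram
    intro i j
    have e0 : fAC 0 = a := rfl
    have e1 : fAC 1 = zf := rfl
    have e2 : fAC 2 = c := rfl
    rw [e0, e1, e2, ← ha i j, hzsum i j, ← hc i j]
    simp [Matrix.add_apply]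
  have hBC : ∀ i j, (B + C) i j
      = ∑ x : Tι n, (starRingEnd ℂ) (fBC x.1 i x.2) * fBC x.1 j x.2 := by
    apply gram
    intro i j
    have e0 : fBC 0 = zf := rfl
    have e1 : fBC 1 = b := rfl
    have e2 : fBC 2 = c := rfl
    rw [e0, e1, e2, hzsum i j, ← hb i j, ← hc i j]
    simp [Matrix.add_apply]
  have hCC : ∀ i j, C i j
      = ∑ x : Tι n, (starRingEnd ℂ) (fC x.1 i x.2) * fC x.1 j x.2 := by
    apply gram
    intro i j
    have e0 : fC 0 = zf := rfl
    have e1 : fC 1 = zf := rfl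
    have e2 : fC 2 = c := rfl
    rw [e0, e1, e2, hzsum i j, ← hc i j]
    simp
  -- the saturated sets
  set sU : Finset (Fin n → Fin 3) := satS (fun _ => True) with hsU
  set sAC : Finset (Fin n → Fin 3) := satS (fun q => q.2 = 0) with hsAC
  set sBC : Finset (Fin n → Fin 3) := satS (fun q => q.1 = 0) with hsBC
  set sC : Finset (Fin n → Fin 3) := satS (fun q => q.1 = 0 ∧ q.2 = 0) with hsC
  have memAC : ∀ g : Fin n → Fin 3, g ∈ sAC ↔ ∀ i, g i ≠ 1 := by
    intro g
    simp [hsAC, satS, Kc, Finset.card_eq_zero, Finset.filter_eq_empty_iff]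
  have memBC : ∀ g : Fin n → Fin 3, g ∈ sBC ↔ ∀ i, g i ≠ 0 := by
    intro g
    simp [hsBC, satS, Kc, Finset.card_eq_zero, Finset.filter_eq_empty_iff]
  have memC : ∀ g : Fin n → Fin 3, g ∈ sC ↔ (∀ i, g i ≠ 0) ∧ ∀ i, g i ≠ 1 := by
    intro g
    simp [hsC, satS, Kc, Finset.card_eq_zero, Finset.filter_eq_empty_iff]
  have hU : sU = (univ : Finset (Fin n → Fin 3)) := by
    ext g; simp [hsU, satS]
  -- Vf decompositions
  have vABC : Vf fABC = ∑ g ∈ sU, ug fABC g := by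
    rw [hU, Vf_eq_sum_ug]
  have vAC : Vf fAC = ∑ g ∈ sAC, ug fABC g := by
    rw [Vf_eq_sum_ug]
    have step1 : ∑ g ∈ (univ : Finset (Fin n → Fin 3)), ug fAC g
        = ∑ g ∈ sAC, ug fAC g := by
      symm
      have : sAC = univ.filter (fun g => ∀ i, g i ≠ 1) := by
        ext g; rw [memAC]; simp
      rw [this]
      apply Finset.sum_filter_of_ne
      intro g _ hne
      by_contra hcon
      push_neg at hcon
      obtain ⟨i0, hi0⟩ := hcon
      exact hne (ug_zero fAC g 1 rfl i0 hi0)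
    rw [step1]
    refine Finset.sum_congr rfl fun g hg => ?_
    apply ug_congr
    intro i
    rcases fin3_cases (g i) with h0 | h1 | h2
    · rw [h0]; rfl
    · exact absurd h1 ((memAC g).mp hg i)
    · rw [h2]; rfl
  have vBC : Vf fBC = ∑ g ∈ sBC, ug fABC g := by
    rw [Vf_eq_sum_ug]
    have step1 : ∑ g ∈ (univ : Finset (Fin n → Fin 3)), ug fBC g
        = ∑ g ∈ sBC, ug fBC g := by
      symm
      have : sBC = univ.filter (fun g => ∀ i, g i ≠ 0) := by
        ext g; rw [memBC]; simp
      rw [this]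
      apply Finset.sum_filter_of_ne
      intro g _ hne
      by_contra hcon
      push_neg at hcon
      obtain ⟨i0, hi0⟩ := hcon
      exact hne (ug_zero fBC g 0 rfl i0 hi0)
    rw [step1]
    refine Finset.sum_congr rfl fun g hg => ?_
    apply ug_congr
    intro i
    rcases fin3_cases (g i) with h0 | h1 | h2
    · exact absurd h0 ((memBC g).mp hg i)
    · rw [h1]; rfl
    · rw [h2]; rfl
  have vC : Vf fC = ∑ g ∈ sC, ug fABC g := by
    rw [Vf_eq_sum_ug]
    have step1 : ∑ g ∈ (univ : Finset (Fin n → Fin 3)), ug fC g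
        = ∑ g ∈ sC, ug fC g := by
      symm
      have : sC = univ.filter (fun g => (∀ i, g i ≠ 0) ∧ ∀ i, g i ≠ 1) := by
        ext g; rw [memC]; simp
      rw [this]
      apply Finset.sum_filter_of_ne
      intro g _ hne
      constructor
      · intro i0
        by_contra hi0
        exact hne (ug_zero fC g 0 rfl i0 hi0)
      · intro i0
        by_contra hi0
        exact hne (ug_zero fC g 1 rfl i0 hi0)
    rw [step1]
    refine Finset.sum_congr rfl fun g hg => ?_
    apply ug_congr
    intro i
    rcases fin3_cases (g i) with h0 | h1 | h2
    · exact absurd h0 (((memC g).mp hg).1 i)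
    · exact absurd h1 (((memC g).mp hg).2 i)
    · rw [h2]; rfl
  -- gmf as class sums
  have toD : ∀ (fam : Fin 3 → Fin n → Fin n → ℂ) (X : Matrix (Fin n) (Fin n) ℂ)
      (s : Finset (Fin n → Fin 3)),
      (∀ i j, X i j = ∑ x : Tι n, (starRingEnd ℂ) (fam x.1 i x.2) * fam x.1 j x.2) →
      (Vf fam = ∑ g ∈ s, ug fABC g) →
      gmf G χ X = ∑ g ∈ s, ∑ g' ∈ s, Bf G χ (ug fABC g) (ug fABC g') := by
    intro fam X s hX hV
    have h1 : gmf G χ X = Bf G χ (Vf fam) (Vf fam) :=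
      gmf_eq_Bf G χ X (fun i x => fam x.1 i x.2) hX
    rw [h1, hV, Bf_sum_left]
    exact Finset.sum_congr rfl fun g _ => Bf_sum_right G χ s _ _
  have gABC : gmf G χ (A + B + C) = ∑ g ∈ sU, Sg G χ fABC g := by
    rw [toD fABC (A + B + C) sU hABC vABC, hsU, sum_satS]
  have gAC : gmf G χ (A + C) = ∑ g ∈ sAC, Sg G χ fABC g := by
    rw [toD fAC (A + C) sAC hAC vAC, hsAC, sum_satS]
  have gBC : gmf G χ (B + C) = ∑ g ∈ sBC, Sg G χ fABC g := by
    rw [toD fBC (B + C) sBC hBC vBC, hsBC, sum_satS]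
  have gC : gmf G χ C = ∑ g ∈ sC, Sg G χ fABC g := by
    rw [toD fC C sC hCC vC, hsC, sum_satS]
  rw [gABC, gAC, gBC, gC]
  -- finset algebra
  have hint : sAC ∩ sBC = sC := by
    ext g
    simp only [Finset.mem_inter, hsAC, hsBC, hsC, satS, Finset.mem_filter,
      Finset.mem_univ, true_and]
    tauto
  have hsum1 : ∑ g ∈ sAC, Sg G χ fABC g + ∑ g ∈ sBC, Sg G χ fABC g
      = ∑ g ∈ sAC ∪ sBC, Sg G χ fABC g + ∑ g ∈ sC, Sg G χ fABC g := by
    rw [← hint, Finset.sum_union_inter]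
  have hcomplsat : (sAC ∪ sBC)ᶜ = satS (n := n) (fun q => ¬(q.2 = 0 ∨ q.1 = 0)) := by
    ext g
    simp only [Finset.mem_compl, Finset.mem_union, hsAC, hsBC, satS,
      Finset.mem_filter, Finset.mem_univ, true_and]
  have hsum2 : ∑ g ∈ sU, Sg G χ fABC g
      = ∑ g ∈ sAC ∪ sBC, Sg G χ fABC g + ∑ g ∈ (sAC ∪ sBC)ᶜ, Sg G χ fABC g := by
    rw [hU, ← Finset.sum_add_sum_compl (sAC ∪ sBC) (Sg G χ fABC)]
  have hpos : 0 ≤ ∑ g ∈ (sAC ∪ sBC)ᶜ, Sg G χ fABC g := by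
    rw [hcomplsat]
    exact satS_nonneg G χ hχ fABC _
  rw [hsum1, hsum2]
  exact add_le_add_left (le_add_of_nonneg_right hpos) (∑ g ∈ sC, Sg G χ fABC g)

end GMFAux

/-- Generalized matrix functions are strongly superadditive over the cone of
positive semidefinite matrices. -/
theorem gmf_strongly_superadditive {n : ℕ}
    (G : Subgroup (Equiv.Perm (Fin n))) (χ : G →* ℂ)
    (hχ : ∀ g : G, ‖χ g‖ = 1)
    (A B C : Matrix (Fin n) (Fin n) ℂ)
    (hA : A.PosSemidef) (hB : B.PosSemidef) (hC : C.PosSemidef) :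
    gmf G χ (A + C) + gmf G χ (B + C) ≤ gmf G χ (A + B + C) + gmf G χ C :=
  GMFAux.main G χ hχ A B C hA hB hC
end

section
/- Let A, B, C be positive semidefinite n×n complex matrices. Then per(A + B + C) + per(C) ≥ per(A + C) + per(B + C), where all four permanents are (nonnegative) real numbers. That is, the permanent is strongly superadditive over the cone of positive semidefinite matrices. -/
open Matrix Finset
open scoped ComplexOrder

namespace PermSuperadd

lemma prod_sum_fun {n : ℕ} {κ : Type*} [Fintype κ] (f : Fin n → κ → ℂ) :
    ∏ i, ∑ k, f i k = ∑ g : Fin n → κ, ∏ i, f i (g i) := by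
  classical
  simpa using (MultilinearMap.mkPiAlgebra ℂ (Fin n) ℂ).map_sum (g := f)

lemma nonneg_of_nat_mul_nonneg (b : ℂ) (k : ℕ) (hk : 0 < k) (h : 0 ≤ (k : ℂ) * b) :
    0 ≤ b := by
  have h0 : (0:ℂ) ≤ ((k:ℂ))⁻¹ := by
    have : ((k:ℂ))⁻¹ = (((k:ℝ))⁻¹ : ℝ) := by push_cast; ring
    rw [this, Complex.zero_le_real]
    positivity
  have := mul_nonneg h0 h
  rwa [inv_mul_cancel_left₀ (by exact_mod_cast hk.ne' : (k:ℂ) ≠ 0)] at this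

lemma fin3eq2 (k : Fin 3) (h0 : k ≠ 0) (h1 : k ≠ 1) : k = 2 := by
  fin_cases k <;> simp_all

/-- Composition with a permutation, as an equivalence on function types. -/
def cEquiv {n : ℕ} {β : Type*} (τ : Equiv.Perm (Fin n)) : (Fin n → β) ≃ (Fin n → β) where
  toFun f := f ∘ τ
  invFun f := f ∘ ⇑τ⁻¹
  left_inv f := by funext i; simp
  right_inv f := by funext i; simp

variable {n : ℕ} (V : Fin 3 → Matrix (Fin n) (Fin n) ℂ)

/-- Coordinate of the tensor `⊗ i, (column i of V (h i))`. -/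
noncomputable def Xc (h : Fin n → Fin 3) (x : Fin n → Fin n) : ℂ :=
  ∏ i, V (h i) (x i) i

/-- Symmetrization of `Xc`. -/
noncomputable def Gc (h : Fin n → Fin 3) (x : Fin n → Fin n) : ℂ :=
    ∑ σ : Equiv.Perm (Fin n), Xc V (h ∘ σ) (x ∘ σ)

lemma Gc_comp (h : Fin n → Fin 3) (x : Fin n → Fin n) (τ : Equiv.Perm (Fin n)) :
    Gc V (h ∘ τ) (x ∘ τ) = Gc V h x := by
  unfold Gc
  rw [← Equiv.sum_comp (Equiv.mulLeft τ) (fun σ => Xc V (h ∘ σ) (x ∘ σ))]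
  refine Finset.sum_congr rfl fun σ _ => ?_
  have h1 : (h ∘ ⇑τ) ∘ ⇑σ = h ∘ ⇑(Equiv.mulLeft τ σ) := by
    funext i; simp [Equiv.Perm.mul_apply]
  have h2 : (x ∘ ⇑τ) ∘ ⇑σ = x ∘ ⇑(Equiv.mulLeft τ σ) := by
    funext i; simp [Equiv.Perm.mul_apply]
  rw [h1, h2]

lemma Qc_eq (h : Fin n → Fin 3) :
    (∑ σ : Equiv.Perm (Fin n), ∏ i, ((V (h i))ᴴ * V (h i)) (σ i) i)
      = ∑ x : Fin n → Fin n, star (Gc V h x) * Xc V h x := by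
  classical
  have e1 : ∀ σ : Equiv.Perm (Fin n),
      (∏ i, ((V (h i))ᴴ * V (h i)) (σ i) i)
        = ∑ x : Fin n → Fin n, star (∏ i, V (h i) (x i) (σ i)) * Xc V h x := by
    intro σ
    have e0 : ∀ i, ((V (h i))ᴴ * V (h i)) (σ i) i
        = ∑ x : Fin n, star (V (h i) x (σ i)) * V (h i) x i := by
      intro i
      simp [Matrix.mul_apply, Matrix.conjTranspose_apply]
    rw [Finset.prod_congr rfl fun i _ => e0 i,
      prod_sum_fun (fun i x => star (V (h i) x (σ i)) * V (h i) x i)]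
    refine Finset.sum_congr rfl fun x _ => ?_
    rw [Finset.prod_mul_distrib, ← star_prod]
    rfl
  calc (∑ σ : Equiv.Perm (Fin n), ∏ i, ((V (h i))ᴴ * V (h i)) (σ i) i)
      = ∑ σ : Equiv.Perm (Fin n), ∑ x : Fin n → Fin n,
          star (Xc V (h ∘ σ) (x ∘ σ)) * Xc V h x := by
        rw [← Equiv.sum_comp (Equiv.inv (Equiv.Perm (Fin n)))
          (fun σ => ∑ x : Fin n → Fin n, star (Xc V (h ∘ σ) (x ∘ σ)) * Xc V h x)]
        refine Finset.sum_congr rfl fun σ _ => ?_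
        rw [e1 σ]
        refine Finset.sum_congr rfl fun x _ => ?_
        congr 2
        show (∏ i, V (h i) (x i) (σ i)) = Xc V (h ∘ ⇑(Equiv.inv (Equiv.Perm (Fin n)) σ)) _
        unfold Xc
        rw [← Equiv.prod_comp σ⁻¹ (fun j => V (h j) (x j) (σ j))]
        simp [Equiv.inv]
    _ = ∑ x : Fin n → Fin n, star (Gc V h x) * Xc V h x := by
        rw [Finset.sum_comm]
        refine Finset.sum_congr rfl fun x _ => ?_
        rw [Gc, star_sum, Finset.sum_mul]

lemma key (p : (Fin n → Fin 3) → Prop) [DecidablePred p]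
    (hp : ∀ (h : Fin n → Fin 3) (τ : Equiv.Perm (Fin n)), p (h ∘ τ) ↔ p h) :
    0 ≤ ∑ h ∈ Finset.univ.filter p, ∑ σ : Equiv.Perm (Fin n),
        ∏ i, ((V (h i))ᴴ * V (h i)) (σ i) i := by
  classical
  rw [Finset.sum_congr rfl fun h _ => Qc_eq V h]
  set S := ∑ h ∈ Finset.univ.filter p, ∑ x : Fin n → Fin n,
      star (Gc V h x) * Xc V h x with hS
  -- reindexing invariance
  have hreidx : ∀ τ : Equiv.Perm (Fin n),
      S = ∑ h ∈ Finset.univ.filter p, ∑ x : Fin n → Fin n,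
        star (Gc V h x) * Xc V (h ∘ τ) (x ∘ τ) := by
    intro τ
    rw [hS, Finset.sum_filter, Finset.sum_filter,
      ← Equiv.sum_comp (cEquiv τ) (fun h => if p h then
        (∑ x : Fin n → Fin n, star (Gc V h x) * Xc V h x) else 0)]
    refine Finset.sum_congr rfl fun h _ => ?_
    show (if p (h ∘ ⇑τ) then
        (∑ x : Fin n → Fin n, star (Gc V (h ∘ ⇑τ) x) * Xc V (h ∘ ⇑τ) x) else 0)
      = if p h then (∑ x : Fin n → Fin n, star (Gc V h x) * Xc V (h ∘ ⇑τ) (x ∘ ⇑τ)) else 0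
    simp only [hp h τ]
    by_cases hph : p h
    · simp only [hph, if_true]
      conv_lhs => rw [← Equiv.sum_comp (cEquiv τ)
        (fun x => star (Gc V (h ∘ ⇑τ) x) * Xc V (h ∘ ⇑τ) x)]
      refine Finset.sum_congr rfl fun x _ => ?_
      show star (Gc V (h ∘ ⇑τ) (x ∘ ⇑τ)) * Xc V (h ∘ ⇑τ) (x ∘ ⇑τ) = _
      rw [Gc_comp]
    · simp [hph]
  have hcard : (Fintype.card (Equiv.Perm (Fin n)) : ℂ) * S
      = ∑ h ∈ Finset.univ.filter p, ∑ x : Fin n → Fin n,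
          star (Gc V h x) * Gc V h x := by
    calc (Fintype.card (Equiv.Perm (Fin n)) : ℂ) * S
        = ∑ _τ : Equiv.Perm (Fin n), S := by
          rw [Finset.sum_const, nsmul_eq_mul, Finset.card_univ]
      _ = ∑ τ : Equiv.Perm (Fin n), ∑ h ∈ Finset.univ.filter p,
            ∑ x : Fin n → Fin n, star (Gc V h x) * Xc V (h ∘ τ) (x ∘ τ) :=
          Finset.sum_congr rfl fun τ _ => hreidx τ
      _ = ∑ h ∈ Finset.univ.filter p, ∑ x : Fin n → Fin n,
            ∑ τ : Equiv.Perm (Fin n), star (Gc V h x) * Xc V (h ∘ τ) (x ∘ τ) := by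
          rw [Finset.sum_comm]
          exact Finset.sum_congr rfl fun h _ => by rw [Finset.sum_comm]
      _ = ∑ h ∈ Finset.univ.filter p, ∑ x : Fin n → Fin n,
            star (Gc V h x) * Gc V h x := by
          refine Finset.sum_congr rfl fun h _ => Finset.sum_congr rfl fun x _ => ?_
          rw [← Finset.mul_sum, Gc]
  have hnn : 0 ≤ (Fintype.card (Equiv.Perm (Fin n)) : ℂ) * S := by
    rw [hcard]
    exact Finset.sum_nonneg fun h _ => Finset.sum_nonneg fun x _ =>
      star_mul_self_nonneg _
  exact nonneg_of_nat_mul_nonneg S _ Fintype.card_pos hnn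

lemma perm_expand (W : Fin 3 → Matrix (Fin n) (Fin n) ℂ) :
    (W 0 + W 1 + W 2).permanent
      = ∑ h : Fin n → Fin 3, ∑ σ : Equiv.Perm (Fin n), ∏ i, W (h i) (σ i) i := by
  classical
  unfold Matrix.permanent
  have e1 : ∀ σ : Equiv.Perm (Fin n),
      (∏ i, (W 0 + W 1 + W 2) (σ i) i)
        = ∑ h : Fin n → Fin 3, ∏ i, W (h i) (σ i) i := by
    intro σ
    have e0 : ∀ i, (W 0 + W 1 + W 2) (σ i) i = ∑ k : Fin 3, W k (σ i) i := by
      intro i; simp [Fin.sum_univ_three]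
    rw [Finset.prod_congr rfl fun i _ => e0 i, prod_sum_fun (fun i k => W k (σ i) i)]
  rw [Finset.sum_congr rfl fun σ _ => e1 σ, Finset.sum_comm]

lemma posSemidef_iff_eq_transpose_mul_self {n : ℕ} {A : Matrix (Fin n) (Fin n) ℂ} :
    A.PosSemidef ↔ ∃ B : Matrix (Fin n) (Fin n) ℂ, A = Bᴴ * B := by
  constructor
  · intro hA
    open scoped MatrixOrder Matrix.Norms.L2Operator in
    exact CStarAlgebra.nonneg_iff_eq_star_mul_self.mp hA.nonneg
  · rintro ⟨B, rfl⟩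
    exact posSemidef_conjTranspose_mul_self B

end PermSuperadd

open PermSuperadd

/-- The permanent is strongly superadditive over the cone of positive
semidefinite matrices. -/
theorem permanent_strongly_superadditive {n : ℕ} (A B C : Matrix (Fin n) (Fin n) ℂ)
    (hA : A.PosSemidef) (hB : B.PosSemidef) (hC : C.PosSemidef) :
    (A + C).permanent + (B + C).permanent ≤ (A + B + C).permanent + C.permanent := by
  classical
  obtain ⟨a, ha⟩ := posSemidef_iff_eq_transpose_mul_self.mp hA
  obtain ⟨b, hb⟩ := posSemidef_iff_eq_transpose_mul_self.mp hB
  obtain ⟨c, hc⟩ := posSemidef_iff_eq_transpose_mul_self.mp hC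
  set M : Fin 3 → Matrix (Fin n) (Fin n) ℂ := ![A, B, C] with hM
  set V : Fin 3 → Matrix (Fin n) (Fin n) ℂ := ![a, b, c] with hV
  have hMV : ∀ k : Fin 3, M k = (V k)ᴴ * V k := by
    intro k
    fin_cases k
    exacts [ha, hb, hc]
  set Q : (Fin n → Fin 3) → ℂ :=
    fun h => ∑ σ : Equiv.Perm (Fin n), ∏ i, M (h i) (σ i) i with hQ
  set pA : (Fin n → Fin 3) → Prop := fun h => ∀ i, h i ≠ 1 with hpA
  set pB : (Fin n → Fin 3) → Prop := fun h => ∀ i, h i ≠ 0 with hpB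
  -- expansion of the four permanents
  have expandABC : (A + B + C).permanent = ∑ h : Fin n → Fin 3, Q h := by
    have h0 : A + B + C = M 0 + M 1 + M 2 := rfl
    rw [h0, perm_expand]
  have fin3 : ∀ k : Fin 3, k ≠ 1 → (![A, (0 : Matrix (Fin n) (Fin n) ℂ), C]) k = M k := by
    intro k hk
    fin_cases k
    · rfl
    · exact absurd rfl hk
    · rfl
  have fin3' : ∀ k : Fin 3, k ≠ 0 → (![(0 : Matrix (Fin n) (Fin n) ℂ), B, C]) k = M k := by
    intro k hk
    fin_cases k
    · exact absurd rfl hk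
    · rfl
    · rfl
  have expandAC : (A + C).permanent = ∑ h ∈ Finset.univ.filter pA, Q h := by
    have h1 : A + C = ![A, (0 : Matrix (Fin n) (Fin n) ℂ), C] 0
        + ![A, (0 : Matrix (Fin n) (Fin n) ℂ), C] 1
        + ![A, (0 : Matrix (Fin n) (Fin n) ℂ), C] 2 := by
      show A + C = A + 0 + C; rw [add_zero]
    rw [h1, perm_expand, ← Finset.sum_filter_add_sum_filter_not Finset.univ pA]
    have hz : ∑ h ∈ Finset.univ.filter (fun h => ¬ pA h),
        (∑ σ : Equiv.Perm (Fin n), ∏ i, (![A, (0 : Matrix (Fin n) (Fin n) ℂ), C]) (h i) (σ i) i) = 0 := by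
      refine Finset.sum_eq_zero fun h hh => ?_
      have hh' : ¬ (∀ i, h i ≠ 1) := (Finset.mem_filter.mp hh).2
      push_neg at hh'
      obtain ⟨i0, hi0⟩ := hh'
      refine Finset.sum_eq_zero fun σ _ => ?_
      refine Finset.prod_eq_zero (Finset.mem_univ i0) ?_
      rw [hi0]
      simp
    rw [hz, add_zero]
    refine Finset.sum_congr rfl fun h hh => ?_
    have hh' : ∀ i, h i ≠ 1 := (Finset.mem_filter.mp hh).2
    refine Finset.sum_congr rfl fun σ _ => Finset.prod_congr rfl fun i _ => ?_
    rw [fin3 (h i) (hh' i)]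
  have expandBC : (B + C).permanent = ∑ h ∈ Finset.univ.filter pB, Q h := by
    have h1 : B + C = ![(0 : Matrix (Fin n) (Fin n) ℂ), B, C] 0
        + ![(0 : Matrix (Fin n) (Fin n) ℂ), B, C] 1
        + ![(0 : Matrix (Fin n) (Fin n) ℂ), B, C] 2 := by
      show B + C = 0 + B + C; rw [zero_add]
    rw [h1, perm_expand, ← Finset.sum_filter_add_sum_filter_not Finset.univ pB]
    have hz : ∑ h ∈ Finset.univ.filter (fun h => ¬ pB h),
        (∑ σ : Equiv.Perm (Fin n), ∏ i, (![(0 : Matrix (Fin n) (Fin n) ℂ), B, C]) (h i) (σ i) i) = 0 := by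
      refine Finset.sum_eq_zero fun h hh => ?_
      have hh' : ¬ (∀ i, h i ≠ 0) := (Finset.mem_filter.mp hh).2
      push_neg at hh'
      obtain ⟨i0, hi0⟩ := hh'
      refine Finset.sum_eq_zero fun σ _ => ?_
      refine Finset.prod_eq_zero (Finset.mem_univ i0) ?_
      rw [hi0]
      simp
    rw [hz, add_zero]
    refine Finset.sum_congr rfl fun h hh => ?_
    have hh' : ∀ i, h i ≠ 0 := (Finset.mem_filter.mp hh).2
    refine Finset.sum_congr rfl fun σ _ => Finset.prod_congr rfl fun i _ => ?_
    rw [fin3' (h i) (hh' i)]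
  have expandC : C.permanent = Q (fun _ => 2) := by
    rw [hQ]
    unfold Matrix.permanent
    rfl
  -- the singleton filter
  have hsingle : Finset.univ.filter (fun h : Fin n → Fin 3 => pA h ∧ pB h)
      = {fun _ => 2} := by
    ext h
    simp only [Finset.mem_filter, Finset.mem_univ, true_and, Finset.mem_singleton]
    constructor
    · rintro ⟨h1, h0⟩
      funext i
      exact fin3eq2 (h i) (h0 i) (h1 i)
    · rintro rfl
      exact ⟨fun i => by show (2:Fin 3) ≠ 1; decide, fun i => by show (2:Fin 3) ≠ 0; decide⟩
  -- splitting identities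
  have split1 := Finset.sum_filter_add_sum_filter_not Finset.univ pA Q
  have split2 := Finset.sum_filter_add_sum_filter_not
    (Finset.univ.filter (fun h => ¬ pA h)) pB Q
  have split3 := Finset.sum_filter_add_sum_filter_not
    (Finset.univ.filter pB) pA Q
  simp only [Finset.filter_filter] at split2 split3
  have hswap : Finset.univ.filter (fun h : Fin n → Fin 3 => pB h ∧ pA h)
      = Finset.univ.filter (fun h => pA h ∧ pB h) := by
    ext h; simp [and_comm]
  have hswap2 : Finset.univ.filter (fun h : Fin n → Fin 3 => pB h ∧ ¬ pA h)
      = Finset.univ.filter (fun h => ¬ pA h ∧ pB h) := by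
    ext h; simp [and_comm]
  rw [hswap, hswap2, hsingle, Finset.sum_singleton] at split3
  -- nonnegativity of the cross term
  have hkey : 0 ≤ ∑ h ∈ Finset.univ.filter (fun h => ¬ pA h ∧ ¬ pB h), Q h := by
    have hQform : ∀ h : Fin n → Fin 3,
        Q h = ∑ σ : Equiv.Perm (Fin n), ∏ i, ((V (h i))ᴴ * V (h i)) (σ i) i := by
      intro h
      rw [hQ]
      exact Finset.sum_congr rfl fun σ _ => Finset.prod_congr rfl fun i _ => by
        rw [hMV (h i)]
    rw [Finset.sum_congr rfl fun h _ => hQform h]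
    refine key V (fun h => ¬ pA h ∧ ¬ pB h) ?_
    intro h τ
    have hallA : (∀ i, (h ∘ τ) i ≠ (1 : Fin 3)) ↔ (∀ i, h i ≠ 1) := by
      constructor
      · intro H i; simpa using H (τ⁻¹ i)
      · intro H i; exact H _
    have hallB : (∀ i, (h ∘ τ) i ≠ (0 : Fin 3)) ↔ (∀ i, h i ≠ 0) := by
      constructor
      · intro H i; simpa using H (τ⁻¹ i)
      · intro H i; exact H _
    show (¬ (∀ i, (h ∘ τ) i ≠ 1) ∧ ¬ (∀ i, (h ∘ τ) i ≠ 0))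
        ↔ (¬ (∀ i, h i ≠ 1) ∧ ¬ (∀ i, h i ≠ 0))
    rw [hallA, hallB]
  -- combine
  rw [expandABC, expandAC, expandBC, expandC]
  have total : (∑ h : Fin n → Fin 3, Q h) + Q (fun _ => 2)
      = (∑ h ∈ Finset.univ.filter pA, Q h) + (∑ h ∈ Finset.univ.filter pB, Q h)
        + ∑ h ∈ Finset.univ.filter (fun h => ¬ pA h ∧ ¬ pB h), Q h := by
    rw [← split1, ← split2, ← split3]
    ring
  rw [total]
  exact le_add_of_nonneg_right hkey
end

section
/- Let A, B, C be positive semidefinite ℓ×ℓ complex matrices and let k be a positive integer. Then, in the Loewner order, ⊗^k(A + B + C) + ⊗^k C ≥ ⊗^k(A + C) + ⊗^k(B + C), where ⊗^k X denotes the k-fold Kronecker (tensor) power of X. -/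
open Matrix
open scoped ComplexOrder

set_option maxHeartbeats 1000000

/-- The k-fold Kronecker (tensor) power of an ℓ×ℓ matrix, with rows and columns
indexed by k-tuples of indices: the ((a₁,…,a_k),(b₁,…,b_k)) entry is ∏ᵢ X (aᵢ) (bᵢ). -/
def tensorPow {l : ℕ} (k : ℕ) (X : Matrix (Fin l) (Fin l) ℂ) :
    Matrix (Fin k → Fin l) (Fin k → Fin l) ℂ :=
  Matrix.of fun a b => ∏ i, X (a i) (b i)

/-- The mixed tensor product of a family of matrices. -/
def mixProd {l k : ℕ} (X : Fin k → Matrix (Fin l) (Fin l) ℂ) :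
    Matrix (Fin k → Fin l) (Fin k → Fin l) ℂ :=
  Matrix.of fun a b => ∏ i, X i (a i) (b i)

open scoped MatrixOrder in
lemma psd_exists_conjTranspose_mul_self {n : Type} [Fintype n] [DecidableEq n]
    (A : Matrix n n ℂ) (hA : A.PosSemidef) : ∃ B : Matrix n n ℂ, A = Bᴴ * B := by
  obtain ⟨X, hX, -, hXA⟩ := CFC.exists_sqrt_of_isSelfAdjoint_of_quasispectrumRestricts hA.isHermitian
      (QuasispectrumRestricts.nnreal_of_nonneg hA.nonneg)
  exact ⟨X, by rw [← hXA, ← star_eq_conjTranspose, hX.star_eq]⟩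

lemma mixProd_posSemidef {l k : ℕ} (X : Fin k → Matrix (Fin l) (Fin l) ℂ)
    (hX : ∀ i, (X i).PosSemidef) : (mixProd X).PosSemidef := by
  choose S hS using fun i => psd_exists_conjTranspose_mul_self (X i) (hX i)
  have : mixProd X = (mixProd S)ᴴ * mixProd S := by
    ext a b
    simp only [mixProd, Matrix.mul_apply, Matrix.conjTranspose_apply, Matrix.of_apply]
    have h1 : ∀ i, X i (a i) (b i) = ∑ m, (starRingEnd ℂ) (S i m (a i)) * S i m (b i) := by
      intro i
      rw [hS i]
      simp [Matrix.mul_apply, Matrix.conjTranspose_apply]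
    calc ∏ i, X i (a i) (b i)
        = ∏ i, ∑ m ∈ Finset.univ, (starRingEnd ℂ) (S i m (a i)) * S i m (b i) := by
          simp_rw [h1]
      _ = ∑ c ∈ Fintype.piFinset (fun _ => (Finset.univ : Finset (Fin l))),
            ∏ i, (starRingEnd ℂ) (S i (c i) (a i)) * S i (c i) (b i) :=
          Finset.prod_univ_sum _ _
      _ = ∑ c : Fin k → Fin l, star (∏ i, S i (c i) (a i)) * ∏ i, S i (c i) (b i) := by
          rw [Fintype.piFinset_univ]
          refine Finset.sum_congr rfl fun c _ => ?_
          rw [star_prod, Finset.prod_mul_distrib]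
          rfl
  rw [this]
  exact Matrix.posSemidef_conjTranspose_mul_self _

/-- Kronecker powers are strongly superadditive over the cone of positive
semidefinite matrices, in the Loewner order. -/
theorem tensorPow_strongly_superadditive {l : ℕ} (k : ℕ) (hk : 0 < k)
    (A B C : Matrix (Fin l) (Fin l) ℂ)
    (hA : A.PosSemidef) (hB : B.PosSemidef) (hC : C.PosSemidef) :
    (tensorPow k (A + B + C) + tensorPow k C -
        tensorPow k (A + C) - tensorPow k (B + C)).PosSemidef := by
  classical
  set P : Fin 3 → Matrix (Fin l) (Fin l) ℂ := ![A, B, C] with hP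
  have hPpsd : ∀ j, (P j).PosSemidef := by
    intro j
    fin_cases j <;> simpa [hP]
  set N : (Fin k → Fin 3) → Matrix (Fin k → Fin l) (Fin k → Fin l) ℂ :=
    fun f => mixProd (fun i => P (f i)) with hN
  -- expansions
  have h1 : tensorPow k (A + B + C) = ∑ f : Fin k → Fin 3, N f := by
    ext a b
    have : ∀ x y, (A + B + C) x y = ∑ j ∈ (Finset.univ : Finset (Fin 3)), P j x y := by
      intro x y; simp [hP, Fin.sum_univ_three]
    simp only [tensorPow, Matrix.of_apply]
    rw [show (∏ i, (A + B + C) (a i) (b i)) =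
        ∏ i, ∑ j ∈ (Finset.univ : Finset (Fin 3)), P j (a i) (b i) by
      exact Finset.prod_congr rfl fun i _ => this _ _]
    rw [Finset.prod_univ_sum, Fintype.piFinset_univ]
    simp [hN, mixProd, Matrix.sum_apply]
  have h2 : tensorPow k (A + C)
      = ∑ f ∈ Fintype.piFinset (fun _ : Fin k => ({0, 2} : Finset (Fin 3))), N f := by
    ext a b
    have : ∀ x y, (A + C) x y = ∑ j ∈ ({0, 2} : Finset (Fin 3)), P j x y := by
      intro x y
      rw [Finset.sum_insert (by decide), Finset.sum_singleton]
      simp [hP]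
    simp only [tensorPow, Matrix.of_apply]
    rw [show (∏ i, (A + C) (a i) (b i)) =
        ∏ i, ∑ j ∈ ({0, 2} : Finset (Fin 3)), P j (a i) (b i) by
      exact Finset.prod_congr rfl fun i _ => this _ _]
    rw [Finset.prod_univ_sum]
    simp [hN, mixProd, Matrix.sum_apply]
  have h3 : tensorPow k (B + C)
      = ∑ f ∈ Fintype.piFinset (fun _ : Fin k => ({1, 2} : Finset (Fin 3))), N f := by
    ext a b
    have : ∀ x y, (B + C) x y = ∑ j ∈ ({1, 2} : Finset (Fin 3)), P j x y := by
      intro x y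
      rw [Finset.sum_insert (by decide), Finset.sum_singleton]
      simp [hP]
    simp only [tensorPow, Matrix.of_apply]
    rw [show (∏ i, (B + C) (a i) (b i)) =
        ∏ i, ∑ j ∈ ({1, 2} : Finset (Fin 3)), P j (a i) (b i) by
      exact Finset.prod_congr rfl fun i _ => this _ _]
    rw [Finset.prod_univ_sum]
    simp [hN, mixProd, Matrix.sum_apply]
  have h4 : tensorPow k C = N (fun _ => 2) := by
    ext a b
    simp [tensorPow, hN, mixProd, hP]
  set s := Fintype.piFinset (fun _ : Fin k => ({0, 2} : Finset (Fin 3))) with hs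
  set t := Fintype.piFinset (fun _ : Fin k => ({1, 2} : Finset (Fin 3))) with ht
  have hst : s ∩ t = {fun _ => 2} := by
    ext f
    simp only [Finset.mem_inter, hs, ht, Fintype.mem_piFinset, Finset.mem_singleton,
      funext_iff]
    have key : ∀ x : Fin 3,
        (x ∈ ({0, 2} : Finset (Fin 3)) ∧ x ∈ ({1, 2} : Finset (Fin 3))) ↔ x = 2 := by decide
    constructor
    · rintro ⟨hf1, hf2⟩ i
      exact (key (f i)).1 ⟨hf1 i, hf2 i⟩
    · intro h
      exact ⟨fun i => ((key (f i)).2 (h i)).1, fun i => ((key (f i)).2 (h i)).2⟩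
  set G : Finset (Fin k → Fin 3) := Finset.univ \ (s ∪ t) with hG
  have hsum : (∑ f : Fin k → Fin 3, N f) + N (fun _ => 2)
      = (∑ f ∈ G, N f) + ((∑ f ∈ s, N f) + (∑ f ∈ t, N f)) := by
    have e1 : (∑ f ∈ s, N f) + (∑ f ∈ t, N f)
        = (∑ f ∈ s ∪ t, N f) + (∑ f ∈ s ∩ t, N f) :=
      (Finset.sum_union_inter).symm
    have e2 : (∑ f ∈ G, N f) + (∑ f ∈ s ∪ t, N f) = ∑ f : Fin k → Fin 3, N f := by
      rw [hG]
      exact Finset.sum_sdiff (Finset.subset_univ _)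
    rw [e1, hst, Finset.sum_singleton, ← e2]
    abel
  have hD : tensorPow k (A + B + C) + tensorPow k C -
      tensorPow k (A + C) - tensorPow k (B + C) = ∑ f ∈ G, N f := by
    rw [h1, h2, h3, h4]
    rw [sub_sub, sub_eq_iff_eq_add]
    exact hsum
  rw [hD]
  refine Finset.sum_induction N Matrix.PosSemidef (fun a b ha hb => ha.add hb)
    Matrix.PosSemidef.zero ?_
  intro f _
  exact mixProd_posSemidef _ (fun i => hPpsd (f i))
end

section
/- Let G be a subgroup of the symmetric group S_n and let χ : G → ℂ be a character of degree 1 (a group homomorphism into the complex numbers whose values have modulus one). Let A = [A_{i,j}] be an m×m block matrix with n×n complex blocks that is positive semidefinite as an mn×mn matrix. Then the m×m complex matrix [d_χ^G(A_{i,j})]_{i,j=1}^m is positive semidefinite. That is, generalized matrix functions are completely positive. -/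
open Matrix
open scoped ComplexOrder

open scoped Classical in
lemma gmf_key {n m : ℕ} (G : Subgroup (Equiv.Perm (Fin n))) (χ : G →* ℂ)
    (hχ : ∀ g : G, ‖χ g‖ = 1)
    (C : Matrix (Fin m × Fin n) (Fin m × Fin n) ℂ)
    (A : Fin m → Fin m → Matrix (Fin n) (Fin n) ℂ)
    (hC : ∀ i j p q, A i j p q = ∑ k, (starRingEnd ℂ) (C k (i, p)) * C k (j, q))
    (i j : Fin m) :
    (Fintype.card G : ℂ) * gmf G χ (A i j)
      = ∑ f : Fin n → Fin m × Fin n,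
          (starRingEnd ℂ) (∑ τ : G, χ τ * ∏ p, C (f p) (i, (τ : Equiv.Perm (Fin n)) p)) *
          (∑ σ : G, χ σ * ∏ q, C (f q) (j, (σ : Equiv.Perm (Fin n)) q)) := by
  -- step 1: expand gmf via prod of sums
  have hgmf : gmf G χ (A i j)
      = ∑ ρ : G, χ ρ * ∑ f : Fin n → Fin m × Fin n,
          ∏ p, (starRingEnd ℂ) (C (f p) (i, p)) * C (f p) (j, (ρ : Equiv.Perm (Fin n)) p) := by
    unfold gmf
    refine Finset.sum_congr rfl fun ρ _ => ?_
    congr 1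
    calc ∏ p, A i j p ((ρ : Equiv.Perm (Fin n)) p)
        = ∏ p, ∑ k : Fin m × Fin n, (starRingEnd ℂ) (C k (i, p)) * C k (j, (ρ : Equiv.Perm (Fin n)) p) := by
          simp_rw [hC]
      _ = ∑ f ∈ Fintype.piFinset (fun _ : Fin n => (Finset.univ : Finset (Fin m × Fin n))),
            ∏ p, (starRingEnd ℂ) (C (f p) (i, p)) * C (f p) (j, (ρ : Equiv.Perm (Fin n)) p) :=
          Finset.prod_univ_sum _ _
      _ = _ := by rw [Fintype.piFinset_univ]
  -- step 2: expand RHS into triple sum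
  have hconj : ∀ (τ : G) (f : Fin n → Fin m × Fin n),
      (starRingEnd ℂ) (χ τ * ∏ p, C (f p) (i, (τ : Equiv.Perm (Fin n)) p))
        = (χ τ)⁻¹ * ∏ p, (starRingEnd ℂ) (C (f p) (i, (τ : Equiv.Perm (Fin n)) p)) := by
    intro τ f
    rw [_root_.map_mul, map_prod]
    congr 1
    have h1 : (starRingEnd ℂ) (χ τ) * χ τ = 1 := by
      rw [Complex.conj_mul', hχ τ]; norm_num
    exact eq_inv_of_mul_eq_one_left h1
  -- abbreviation for the σ-indexed inner sum
  set D : Equiv.Perm (Fin n) → ℂ := fun ρ => ∑ g : Fin n → Fin m × Fin n,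
      ∏ q, (starRingEnd ℂ) (C (g q) (i, q)) * C (g q) (j, ρ q) with hD
  -- the per-(τ,σ) reindexing step
  have step : ∀ τ σ : G,
      (∑ f : Fin n → Fin m × Fin n,
        ((χ τ)⁻¹ * ∏ p, (starRingEnd ℂ) (C (f p) (i, (τ : Equiv.Perm (Fin n)) p))) *
        (χ σ * ∏ q, C (f q) (j, (σ : Equiv.Perm (Fin n)) q)))
      = χ (σ * τ⁻¹) * D ((σ * τ⁻¹ : G) : Equiv.Perm (Fin n)) := by
    intro τ σ
    have hscal : (χ τ)⁻¹ * χ σ = χ (σ * τ⁻¹) := by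
      rw [_root_.map_mul, map_inv, mul_comm]
    calc (∑ f : Fin n → Fin m × Fin n,
        ((χ τ)⁻¹ * ∏ p, (starRingEnd ℂ) (C (f p) (i, (τ : Equiv.Perm (Fin n)) p))) *
        (χ σ * ∏ q, C (f q) (j, (σ : Equiv.Perm (Fin n)) q)))
        = ∑ f : Fin n → Fin m × Fin n, χ (σ * τ⁻¹) *
            ∏ p, (starRingEnd ℂ) (C (f p) (i, (τ : Equiv.Perm (Fin n)) p)) *
              C (f p) (j, (σ : Equiv.Perm (Fin n)) p) := by
          refine Finset.sum_congr rfl fun f _ => ?_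
          rw [← hscal, Finset.prod_mul_distrib]
          ring
      _ = χ (σ * τ⁻¹) * ∑ f : Fin n → Fin m × Fin n,
            ∏ p, (starRingEnd ℂ) (C (f p) (i, (τ : Equiv.Perm (Fin n)) p)) *
              C (f p) (j, (σ : Equiv.Perm (Fin n)) p) := by
          rw [Finset.mul_sum]
      _ = χ (σ * τ⁻¹) * D ((σ * τ⁻¹ : G) : Equiv.Perm (Fin n)) := by
          congr 1
          rw [hD]
          -- reindex f ↦ f ∘ τ
          have hre : ∀ g : Fin n → Fin m × Fin n,
              (∏ p, (starRingEnd ℂ) (C (g ((τ : Equiv.Perm (Fin n)) p))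
                    (i, (τ : Equiv.Perm (Fin n)) p)) *
                  C (g ((τ : Equiv.Perm (Fin n)) p)) (j, (σ : Equiv.Perm (Fin n)) p))
              = ∏ q, (starRingEnd ℂ) (C (g q) (i, q)) *
                  C (g q) (j, ((σ * τ⁻¹ : G) : Equiv.Perm (Fin n)) q) := by
            intro g
            rw [← Equiv.prod_comp (τ : Equiv.Perm (Fin n))
              (fun q => (starRingEnd ℂ) (C (g q) (i, q)) *
                C (g q) (j, ((σ * τ⁻¹ : G) : Equiv.Perm (Fin n)) q))]
            refine Finset.prod_congr rfl fun p _ => ?_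
            congr 2
            simp [Equiv.Perm.mul_apply]
          rw [← Equiv.sum_comp
            (Equiv.arrowCongr ((τ : Equiv.Perm (Fin n)).symm) (Equiv.refl (Fin m × Fin n)))
            (fun f : Fin n → Fin m × Fin n =>
              ∏ p, (starRingEnd ℂ) (C (f p) (i, (τ : Equiv.Perm (Fin n)) p)) *
                C (f p) (j, (σ : Equiv.Perm (Fin n)) p))]
          exact Finset.sum_congr rfl fun g _ => hre g
  have hRHS : (∑ f : Fin n → Fin m × Fin n,
        (starRingEnd ℂ) (∑ τ : G, χ τ * ∏ p, C (f p) (i, (τ : Equiv.Perm (Fin n)) p)) *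
        (∑ σ : G, χ σ * ∏ q, C (f q) (j, (σ : Equiv.Perm (Fin n)) q)))
      = ∑ τ : G, ∑ σ : G, ∑ f : Fin n → Fin m × Fin n,
          ((χ τ)⁻¹ * ∏ p, (starRingEnd ℂ) (C (f p) (i, (τ : Equiv.Perm (Fin n)) p))) *
          (χ σ * ∏ q, C (f q) (j, (σ : Equiv.Perm (Fin n)) q)) := by
    simp_rw [map_sum, hconj, Finset.sum_mul_sum]
    rw [Finset.sum_comm]
    exact Finset.sum_congr rfl fun τ _ => Finset.sum_comm
  rw [hRHS]
  calc (Fintype.card G : ℂ) * gmf G χ (A i j)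
      = (Fintype.card G : ℂ) * ∑ ρ : G, χ ρ * D ((ρ : Equiv.Perm (Fin n))) := by rw [hgmf]
    _ = ∑ _τ : G, ∑ ρ : G, χ ρ * D ((ρ : Equiv.Perm (Fin n))) := by
        rw [Finset.sum_const, Finset.card_univ, nsmul_eq_mul]
    _ = ∑ τ : G, ∑ σ : G, χ (σ * τ⁻¹) * D ((σ * τ⁻¹ : G) : Equiv.Perm (Fin n)) := by
        refine Finset.sum_congr rfl fun τ _ => ?_
        rw [← Equiv.sum_comp (Equiv.mulRight τ⁻¹)
          (fun ρ : G => χ ρ * D ((ρ : Equiv.Perm (Fin n))))]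
        rfl
    _ = _ := Finset.sum_congr rfl fun τ _ => Finset.sum_congr rfl fun σ _ => (step τ σ).symm

/-- Generalized matrix functions are completely positive: applied blockwise to a
positive semidefinite block matrix, they yield a positive semidefinite matrix. -/
theorem gmf_completely_positive {n m : ℕ}
    (G : Subgroup (Equiv.Perm (Fin n))) (χ : G →* ℂ)
    (hχ : ∀ g : G, ‖χ g‖ = 1)
    (A : Fin m → Fin m → Matrix (Fin n) (Fin n) ℂ)
    (hA : (blockMx A).PosSemidef) :
    (Matrix.of fun i j => gmf G χ (A i j)).PosSemidef := by
  classical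
  obtain ⟨C, hC⟩ : ∃ C : Matrix (Fin m × Fin n) (Fin m × Fin n) ℂ, blockMx A = Cᴴ * C := by
    open scoped MatrixOrder Matrix.Norms.L2Operator in
    exact CStarAlgebra.nonneg_iff_eq_star_mul_self.mp hA.nonneg
  have hCentry : ∀ i j p q, A i j p q = ∑ k, (starRingEnd ℂ) (C k (i, p)) * C k (j, q) := by
    intro i j p q
    have h := Matrix.ext_iff.mpr hC (i, p) (j, q)
    simpa [blockMx, Matrix.mul_apply, Matrix.conjTranspose_apply, Complex.star_def] using h
  set N : Matrix (Fin n → Fin m × Fin n) (Fin m) ℂ := Matrix.of fun f j =>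
    ∑ σ : G, χ σ * ∏ q, C (f q) (j, (σ : Equiv.Perm (Fin n)) q) with hN
  have key : ∀ i j, (Fintype.card G : ℂ) * gmf G χ (A i j) = (Nᴴ * N) i j := by
    intro i j
    rw [Matrix.mul_apply]
    simp only [hN, Matrix.conjTranspose_apply, Matrix.of_apply, Complex.star_def]
    exact gmf_key G χ hχ C A hCentry i j
  have hcard0 : (Fintype.card G : ℂ) ≠ 0 := by
    exact_mod_cast Fintype.card_ne_zero
  have hMeq : (Matrix.of fun i j => gmf G χ (A i j))
      = ((Fintype.card G : ℂ)⁻¹) • (Nᴴ * N) := by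
    ext i j
    rw [Matrix.smul_apply, ← key i j, smul_eq_mul, inv_mul_cancel_left₀ hcard0]
    rfl
  rw [hMeq]
  have hP := Matrix.posSemidef_conjTranspose_mul_self N
  have hstar : star ((Fintype.card G : ℂ)⁻¹) = (Fintype.card G : ℂ)⁻¹ := by
    simp
  constructor
  · unfold Matrix.IsHermitian
    rw [Matrix.conjTranspose_smul, hstar, hP.1]
  · intro x
    have h2 : (0 : ℂ) ≤ (Fintype.card G : ℂ)⁻¹ := by
      rw [Complex.le_def]
      constructor
      · simp only [Complex.zero_re, ← Complex.ofReal_natCast, ← Complex.ofReal_inv,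
          Complex.ofReal_re]
        positivity
      · simp [← Complex.ofReal_natCast, ← Complex.ofReal_inv]
    exact (hP.smul h2).2 x
end

section
/- (Hua) Let A = [A_{i,j}] be an m×m block matrix with n×n complex blocks that is positive semidefinite as an mn×mn matrix. Then the m×m complex matrix [det A_{i,j}]_{i,j=1}^m of block determinants is positive semidefinite. That is, the determinant is completely positive. -/
open Matrix
open scoped ComplexOrder

private lemma smul_psd {k : ℕ} {M : Matrix (Fin k) (Fin k) ℂ} {c : ℝ}
    (hc : 0 ≤ c) (hM : M.PosSemidef) : ((c : ℂ) • M).PosSemidef := by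
  constructor
  · show ((c:ℂ) • M)ᴴ = _
    rw [conjTranspose_smul, hM.1]; simp
  · intro x
    exact (hM.smul (a := (c : ℂ)) (by exact_mod_cast hc)).2 x


set_option maxHeartbeats 1600000 in
/-- Hua: the determinant is completely positive; the matrix of block determinants
of a positive semidefinite block matrix is positive semidefinite. -/
theorem det_completely_positive {n m : ℕ}
    (A : Fin m → Fin m → Matrix (Fin n) (Fin n) ℂ)
    (hA : (blockMx A).PosSemidef) :
    (Matrix.of fun i j => (A i j).det).PosSemidef := by
  classical
  obtain ⟨B, hB⟩ : ∃ B : Matrix (Fin m × Fin n) (Fin m × Fin n) ℂ, blockMx A = Bᴴ * B := by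
    open scoped MatrixOrder in
    obtain ⟨B, hB⟩ := CStarAlgebra.nonneg_iff_eq_star_mul_self.mp hA.nonneg
    exact ⟨B, hB⟩
  have hent : ∀ i j p q, A i j p q = ∑ k, star (B k (i, p)) * B k (j, q) := by
    intro i j p q
    have := congrFun (congrFun hB (i, p)) (j, q)
    simpa [blockMx, Matrix.mul_apply, conjTranspose_apply] using this
  let G : Matrix (Fin n → (Fin m × Fin n)) (Fin m) ℂ :=
    Matrix.of fun f i => (Matrix.of fun p q => B (f p) (i, q)).det
  let sgn : Equiv.Perm (Fin n) → ℂ := fun σ => ((Equiv.Perm.sign σ : ℤ) : ℂ)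
  have hGdet : ∀ (f : Fin n → (Fin m × Fin n)) (i : Fin m),
      G f i = ∑ σ : Equiv.Perm (Fin n), sgn σ * ∏ p, B (f (σ p)) (i, p) := by
    intro f i
    simp only [G, Matrix.of_apply, Matrix.det_apply', sgn]
  have key : Gᴴ * G = ((n.factorial : ℝ) : ℂ) • Matrix.of (fun i j => (A i j).det) := by
    ext i j
    rw [Matrix.mul_apply]
    -- T σ τ
    set T : Equiv.Perm (Fin n) → Equiv.Perm (Fin n) → ℂ := fun σ τ =>
      ∑ f : Fin n → (Fin m × Fin n), (∏ p, star (B (f (σ p)) (i, p))) * ∏ p, B (f (τ p)) (j, p) with hTdef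
    have step1 : ∑ f, (Gᴴ) i f * G f j
        = ∑ σ : Equiv.Perm (Fin n), ∑ τ : Equiv.Perm (Fin n), (sgn σ * sgn τ) * T σ τ := by
      have hstar : ∀ (f : Fin n → (Fin m × Fin n)), (Gᴴ) i f
          = ∑ σ : Equiv.Perm (Fin n), sgn σ * ∏ p, star (B (f (σ p)) (i, p)) := by
        intro f
        rw [conjTranspose_apply, hGdet, star_sum]
        refine Finset.sum_congr rfl fun σ _ => ?_
        rw [star_mul', star_prod]
        congr 1
        simp [sgn]
      calc ∑ f, (Gᴴ) i f * G f j
          = ∑ f : Fin n → (Fin m × Fin n), ∑ σ : Equiv.Perm (Fin n), ∑ τ : Equiv.Perm (Fin n),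
              (sgn σ * ∏ p, star (B (f (σ p)) (i, p))) * (sgn τ * ∏ p, B (f (τ p)) (j, p)) := by
            refine Finset.sum_congr rfl fun f _ => ?_
            rw [hstar, hGdet, Finset.sum_mul_sum]
        _ = ∑ σ : Equiv.Perm (Fin n), ∑ τ : Equiv.Perm (Fin n), ∑ f : Fin n → (Fin m × Fin n),
              (sgn σ * ∏ p, star (B (f (σ p)) (i, p))) * (sgn τ * ∏ p, B (f (τ p)) (j, p)) := by
            rw [Finset.sum_comm]
            exact Finset.sum_congr rfl fun σ _ => Finset.sum_comm
        _ = ∑ σ : Equiv.Perm (Fin n), ∑ τ : Equiv.Perm (Fin n), (sgn σ * sgn τ) * T σ τ := by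
            refine Finset.sum_congr rfl fun σ _ => Finset.sum_congr rfl fun τ _ => ?_
            rw [hTdef, Finset.mul_sum]
            exact Finset.sum_congr rfl fun f _ => by ring
    have hT : ∀ σ τ, T σ τ = T 1 (σ⁻¹ * τ) := by
      intro σ τ
      refine Fintype.sum_equiv (Equiv.arrowCongr σ.symm (Equiv.refl (Fin m × Fin n))) _ _ ?_
      intro f
      simp [Equiv.arrowCongr, Equiv.Perm.mul_apply]
    have step2 : ∑ σ : Equiv.Perm (Fin n), ∑ τ : Equiv.Perm (Fin n), (sgn σ * sgn τ) * T σ τ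
        = ((n.factorial : ℝ) : ℂ) * ∑ ρ : Equiv.Perm (Fin n), sgn ρ * T 1 ρ := by
      have inner : ∀ σ : Equiv.Perm (Fin n),
          ∑ τ : Equiv.Perm (Fin n), (sgn σ * sgn τ) * T σ τ
            = ∑ ρ : Equiv.Perm (Fin n), sgn ρ * T 1 ρ := by
        intro σ
        have hs : sgn σ * sgn σ = 1 := by
          have h := Int.units_mul_self (Equiv.Perm.sign σ)
          simp only [sgn, ← Int.cast_mul, ← Units.val_mul, h]
          simp
        rw [← Fintype.sum_equiv (Equiv.mulLeft σ)
          (fun ρ => (sgn σ * sgn (σ * ρ)) * T σ (σ * ρ)) _ (fun ρ => rfl)]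
        refine Finset.sum_congr rfl fun ρ _ => ?_
        rw [hT σ (σ * ρ), inv_mul_cancel_left]
        congr 1
        have hmul : sgn (σ * ρ) = sgn σ * sgn ρ := by
          simp [sgn, ← Int.cast_mul, ← Units.val_mul]
        rw [hmul, ← mul_assoc, hs, one_mul]
      calc ∑ σ : Equiv.Perm (Fin n), ∑ τ : Equiv.Perm (Fin n), (sgn σ * sgn τ) * T σ τ
          = ∑ _σ : Equiv.Perm (Fin n), ∑ ρ : Equiv.Perm (Fin n), sgn ρ * T 1 ρ :=
            Finset.sum_congr rfl fun σ _ => inner σ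
        _ = (Fintype.card (Equiv.Perm (Fin n))) •
              ∑ ρ : Equiv.Perm (Fin n), sgn ρ * T 1 ρ := by
            rw [Finset.sum_const, Finset.card_univ]
        _ = ((n.factorial : ℝ) : ℂ) * ∑ ρ : Equiv.Perm (Fin n), sgn ρ * T 1 ρ := by
            rw [Fintype.card_perm, Fintype.card_fin, nsmul_eq_mul]
            push_cast
            ring
    have step3 : ∑ ρ : Equiv.Perm (Fin n), sgn ρ * T 1 ρ = (A i j).det := by
      have hb : ∀ ρ : Equiv.Perm (Fin n), T 1 ρ = ∏ p, A i j p (ρ⁻¹ p) := by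
        intro ρ
        rw [hTdef]
        calc ∑ f : Fin n → (Fin m × Fin n),
              (∏ p, star (B (f ((1 : Equiv.Perm (Fin n)) p)) (i, p))) * ∏ p, B (f (ρ p)) (j, p)
            = ∑ f : Fin n → (Fin m × Fin n), ∏ p, (star (B (f p) (i, p)) * B (f p) (j, ρ⁻¹ p)) := by
              refine Finset.sum_congr rfl fun f _ => ?_
              rw [Finset.prod_mul_distrib]
              congr 1
              have h2 := Equiv.prod_comp ρ (fun p => B (f p) (j, ρ⁻¹ p))
              simp only [Equiv.Perm.inv_def, Equiv.symm_apply_apply] at h2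
              exact h2
          _ = ∏ p, ∑ k : (Fin m × Fin n), star (B k (i, p)) * B k (j, ρ⁻¹ p) :=
              (Fintype.prod_sum (fun p k => star (B k (i, p)) * B k (j, ρ⁻¹ p))).symm
          _ = ∏ p, A i j p (ρ⁻¹ p) := by
              exact Finset.prod_congr rfl fun p _ => (hent i j p (ρ⁻¹ p)).symm
      calc ∑ ρ : Equiv.Perm (Fin n), sgn ρ * T 1 ρ
          = ∑ ρ : Equiv.Perm (Fin n), sgn ρ * ∏ p, A i j p (ρ p) := by
            refine Fintype.sum_equiv (Equiv.inv (Equiv.Perm (Fin n))) _ _ fun ρ => ?_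
            rw [hb]
            simp [sgn]
        _ = (A i j)ᵀ.det := by
            rw [Matrix.det_apply']
            exact Finset.sum_congr rfl fun ρ _ => rfl
        _ = (A i j).det := Matrix.det_transpose _
    rw [step1, step2, step3]
    simp
  have hfac : (0:ℝ) < (n.factorial : ℝ) := by positivity
  have heq : (Matrix.of fun i j => (A i j).det)
      = (((n.factorial : ℝ)⁻¹ : ℝ) : ℂ) • (Gᴴ * G) := by
    rw [key, smul_smul, ← Complex.ofReal_mul, inv_mul_cancel₀ (ne_of_gt hfac)]
    simp
  rw [heq]
  exact smul_psd (by positivity) (posSemidef_conjTranspose_mul_self G)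
end
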